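/- arXiv:2104.01277 — 3 statements merged into one kernel-verified Lean document; each statement's English description precedes it below -/
import Mathlib

section
/- (Carleson Embedding) Let μ be a positive Radon measure on ℝⁿ and (a_I)_{I dyadic} a collection of non-negative numbers. Then for all f ∈ L²(μ), Σ_{I dyadic} a_I |⟨f⟩_I|² ≲ sup_{I dyadic} ( μ(I)^{-1} Σ_{J∈𝒟(I)} a_J ) · ‖f‖²_{L²(μ)}, where ⟨f⟩_I = μ(I)^{-1}∫_I f dμ and 𝒟(I) denotes the dyadic cubes contained in I. -/
open MeasureTheory
open scoped Classical ENNReal NNReal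

noncomputable section

/-- The dyadic cube of scale `k` (side length `2^{-k}`) and position `j` in `ℝⁿ`. -/
def dyadicCube (n : ℕ) (k : ℤ) (j : Fin n → ℤ) : Set (EuclideanSpace ℝ (Fin n)) :=
  {x | ∀ i, (2:ℝ) ^ (-k) * (j i : ℝ) ≤ x i ∧ x i < (2:ℝ) ^ (-k) * ((j i : ℝ) + 1)}

/-- The average `⟨f⟩_s = μ(s)⁻¹ ∫_s f dμ`, set to `0` when `μ(s) = 0`. -/
def avg (n : ℕ) (μ : Measure (EuclideanSpace ℝ (Fin n))) (s : Set (EuclideanSpace ℝ (Fin n)))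
    (f : EuclideanSpace ℝ (Fin n) → ℝ) : ℝ :=
  if μ s = 0 then 0 else (∫ x in s, f x ∂μ) / (μ s).toReal

lemma dyadicCube_nonempty (n : ℕ) (k : ℤ) (j : Fin n → ℤ) : (dyadicCube n k j).Nonempty := by
  refine ⟨(WithLp.toLp 2 (fun i => (2:ℝ) ^ (-k) * (j i : ℝ)) : EuclideanSpace ℝ (Fin n)), fun i => ?_⟩
  constructor
  · exact le_refl _
  · show (2:ℝ) ^ (-k) * (j i : ℝ) < (2:ℝ) ^ (-k) * ((j i : ℝ) + 1)
    have h2 : (0:ℝ) < (2:ℝ) ^ (-k) := zpow_pos (by norm_num) _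
    nlinarith

lemma measurableSet_dyadicCube (n : ℕ) (k : ℤ) (j : Fin n → ℤ) :
    MeasurableSet (dyadicCube n k j) := by
  have : dyadicCube n k j = ⋂ i, {x : EuclideanSpace ℝ (Fin n) |
      (2:ℝ) ^ (-k) * (j i : ℝ) ≤ x i ∧ x i < (2:ℝ) ^ (-k) * ((j i : ℝ) + 1)} := by
    ext x; simp [dyadicCube, Set.mem_iInter]
  rw [this]
  refine MeasurableSet.iInter fun i => ?_
  have hm : Measurable (fun x : EuclideanSpace ℝ (Fin n) => x i) := ((continuous_apply i).comp (PiLp.continuous_ofLp 2 _)).measurable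
  exact (measurableSet_le measurable_const hm).inter (measurableSet_lt hm measurable_const)

lemma dyadicCube_subset_of_inter {n : ℕ} {k k' : ℤ} {j j' : Fin n → ℤ} (hk : k ≤ k')
    (hne : (dyadicCube n k j ∩ dyadicCube n k' j').Nonempty) :
    dyadicCube n k' j' ⊆ dyadicCube n k j := by
  obtain ⟨x, hx, hx'⟩ := hne
  intro y hy i
  have hb : (0:ℝ) < (2:ℝ) ^ (-k') := zpow_pos (by norm_num) _
  set D : ℤ := 2 ^ (k' - k).toNat with hD
  have haD : (2:ℝ) ^ (-k) = (2:ℝ) ^ (-k') * (D : ℝ) := by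
    rw [hD]
    push_cast
    rw [← zpow_natCast (2:ℝ) (k' - k).toNat, ← zpow_add₀ (by norm_num : (2:ℝ) ≠ 0)]
    congr 1
    omega
  have hxi := hx i
  have hxi' := hx' i
  have hyi := hy i
  -- D * j i ≤ j' i
  have h1 : D * j i ≤ j' i := by
    have : (2:ℝ) ^ (-k') * ((D : ℝ) * (j i : ℝ)) ≤ x i := by
      rw [← mul_assoc, ← haD]; exact hxi.1
    have h2 : (2:ℝ) ^ (-k') * ((D : ℝ) * (j i : ℝ)) < (2:ℝ) ^ (-k') * ((j' i : ℝ) + 1) :=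
      lt_of_le_of_lt this hxi'.2
    have h3 : (D : ℝ) * (j i : ℝ) < (j' i : ℝ) + 1 := by
      exact lt_of_mul_lt_mul_left (by linarith [h2]) hb.le
    have : ((D * j i : ℤ) : ℝ) < ((j' i + 1 : ℤ) : ℝ) := by push_cast; linarith
    have := Int.lt_iff_add_one_le.mp (by exact_mod_cast this)
    omega
  -- j' i + 1 ≤ D * (j i + 1)
  have h2 : j' i + 1 ≤ D * (j i + 1) := by
    have hle : (2:ℝ) ^ (-k') * (j' i : ℝ) < (2:ℝ) ^ (-k') * ((D:ℝ) * ((j i : ℝ) + 1)) := by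
      rw [← mul_assoc, ← haD]
      exact lt_of_le_of_lt hxi'.1 hxi.2
    have h3 : (j' i : ℝ) < (D : ℝ) * ((j i : ℝ) + 1) := lt_of_mul_lt_mul_left (by linarith) hb.le
    have : ((j' i : ℤ) : ℝ) < ((D * (j i + 1) : ℤ) : ℝ) := by push_cast; linarith
    have := Int.lt_iff_add_one_le.mp (by exact_mod_cast this)
    omega
  constructor
  · calc (2:ℝ) ^ (-k) * (j i : ℝ) = (2:ℝ) ^ (-k') * ((D:ℝ) * (j i : ℝ)) := by
          rw [← mul_assoc, ← haD]
      _ ≤ (2:ℝ) ^ (-k') * (j' i : ℝ) := by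
          have : ((D * j i : ℤ) : ℝ) ≤ ((j' i : ℤ) : ℝ) := by exact_mod_cast h1
          push_cast at this
          nlinarith
      _ ≤ y i := hyi.1
  · calc y i < (2:ℝ) ^ (-k') * ((j' i : ℝ) + 1) := hyi.2
      _ ≤ (2:ℝ) ^ (-k') * ((D:ℝ) * ((j i : ℝ) + 1)) := by
          have : ((j' i + 1 : ℤ) : ℝ) ≤ ((D * (j i + 1) : ℤ) : ℝ) := by exact_mod_cast h2
          push_cast at this
          nlinarith
      _ = (2:ℝ) ^ (-k) * ((j i : ℝ) + 1) := by rw [← mul_assoc, ← haD]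

lemma dyadicCube_eq_of_inter {n : ℕ} {k : ℤ} {j j' : Fin n → ℤ}
    (hne : (dyadicCube n k j ∩ dyadicCube n k j').Nonempty) : j = j' := by
  obtain ⟨x, hx, hx'⟩ := hne
  funext i
  have h1 := hx i
  have h2 := hx' i
  have hb : (0:ℝ) < (2:ℝ) ^ (-k) := zpow_pos (by norm_num) _
  have e1 : (j i : ℝ) < (j' i : ℝ) + 1 := by
    have := lt_of_le_of_lt h1.1 h2.2
    exact lt_of_mul_lt_mul_left (by linarith) hb.le
  have e2 : (j' i : ℝ) < (j i : ℝ) + 1 := by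
    have := lt_of_le_of_lt h2.1 h1.2
    exact lt_of_mul_lt_mul_left (by linarith) hb.le
  have : j i < j' i + 1 := by exact_mod_cast e1
  have : j' i < j i + 1 := by exact_mod_cast e2
  omega
abbrev cubeOf (n : ℕ) (P : ℤ × (Fin n → ℤ)) : Set (EuclideanSpace ℝ (Fin n)) :=
  dyadicCube n P.1 P.2

lemma exists_selection (n : ℕ) (S : Set (ℤ × (Fin n → ℤ))) (N₀ : ℤ) :
    ∃ Φ : (ℤ × (Fin n → ℤ)) → (ℤ × (Fin n → ℤ)),
      (∀ P, P ∈ S → N₀ ≤ P.1 →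
        Φ P ∈ S ∧ cubeOf n P ⊆ cubeOf n (Φ P)) ∧
      (∀ P P', P ∈ S → N₀ ≤ P.1 → P' ∈ S → N₀ ≤ P'.1 → Φ P ≠ Φ P' →
        Disjoint (cubeOf n (Φ P)) (cubeOf n (Φ P'))) := by
  -- step: minimal-scale ancestor within S with scale ≥ N₀
  have step : ∀ P, P ∈ S → N₀ ≤ P.1 → ∃ Q, Q ∈ S ∧ N₀ ≤ Q.1 ∧ cubeOf n P ⊆ cubeOf n Q ∧
      ∀ Q', Q' ∈ S → N₀ ≤ Q'.1 → cubeOf n P ⊆ cubeOf n Q' → Q.1 ≤ Q'.1 := by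
    intro P hPS hPN
    set T : Set ℤ := {k | N₀ ≤ k ∧ ∃ j, ((k, j) ∈ S ∧ cubeOf n P ⊆ dyadicCube n k j)} with hT
    have hTne : P.1 ∈ T := ⟨hPN, P.2, by simpa using hPS, subset_rfl⟩
    have hbdd : ∀ k ∈ T, N₀ ≤ k := fun k hk => hk.1
    obtain ⟨k₀, hk₀T, hk₀min⟩ := Int.exists_least_of_bdd (P := fun k => k ∈ T) ⟨N₀, fun k hk => hbdd k hk⟩ ⟨P.1, hTne⟩
    obtain ⟨hk₀N, j₀, hj₀S, hj₀sub⟩ := hk₀T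
    refine ⟨(k₀, j₀), hj₀S, hk₀N, hj₀sub, ?_⟩
    intro Q' hQ'S hQ'N hsub
    exact hk₀min Q'.1 ⟨hQ'N, Q'.2, by simpa using hQ'S, hsub⟩
  classical
  choose! Φ h1 h2 h3 h4 using step
  refine ⟨Φ, fun P hP hN => ⟨h1 P hP hN, h3 P hP hN⟩, ?_⟩
  -- key: if cubes of Φ P, Φ P' intersect then Φ P = Φ P'
  have key : ∀ P P', P ∈ S → N₀ ≤ P.1 → P' ∈ S → N₀ ≤ P'.1 → (Φ P).1 ≤ (Φ P').1 →
      (cubeOf n (Φ P) ∩ cubeOf n (Φ P')).Nonempty → Φ P = Φ P' := by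
    intro P P' hP hN hP' hN' hle hint
    have hsub : cubeOf n (Φ P') ⊆ cubeOf n (Φ P) := dyadicCube_subset_of_inter hle hint
    have hsub2 : cubeOf n P' ⊆ cubeOf n (Φ P) := (h3 P' hP' hN').trans hsub
    have : (Φ P').1 ≤ (Φ P).1 := h4 P' hP' hN' (Φ P) (h1 P hP hN) (h2 P hP hN) hsub2
    have heq : (Φ P).1 = (Φ P').1 := le_antisymm hle this
    have hj : (Φ P).2 = (Φ P').2 := by
      apply dyadicCube_eq_of_inter (k := (Φ P).1)
      have h5 : cubeOf n (Φ P') = dyadicCube n (Φ P).1 (Φ P').2 := by rw [heq]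
      rw [← h5]
      exact hint
    exact Prod.ext heq hj
  intro P P' hP hN hP' hN' hne
  by_contra hnd
  rw [Set.not_disjoint_iff_nonempty_inter] at hnd
  rcases le_total (Φ P).1 (Φ P').1 with h | h
  · exact hne (key P P' hP hN hP' hN' h hnd)
  · exact hne ((key P' P hP' hN' hP hN h ⟨hnd.some, hnd.some_mem.2, hnd.some_mem.1⟩).symm)
/-- Finite disjointification core. -/
lemma finite_disjointification (n : ℕ) (S : Set (ℤ × (Fin n → ℤ)))
    (F : Finset (ℤ × (Fin n → ℤ))) (hF : ↑F ⊆ S) :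
    ∃ (D : Finset (ℤ × (Fin n → ℤ))) (Φ : (ℤ × (Fin n → ℤ)) → (ℤ × (Fin n → ℤ))),
      ↑D ⊆ S ∧ (D : Set (ℤ × (Fin n → ℤ))).PairwiseDisjoint (cubeOf n) ∧
      D = F.image Φ ∧
      (∀ P ∈ F, cubeOf n P ⊆ cubeOf n (Φ P)) := by
  rcases F.eq_empty_or_nonempty with rfl | hFne
  · exact ⟨∅, id, by simp, by simp, by simp, by simp⟩
  · set N₀ : ℤ := (F.image Prod.fst).min' (hFne.image _) with hN₀
    have hNle : ∀ P ∈ F, N₀ ≤ P.1 := fun P hP =>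
      Finset.min'_le _ _ (Finset.mem_image_of_mem _ hP)
    obtain ⟨Φ, hΦ1, hΦ2⟩ := exists_selection n S N₀
    refine ⟨F.image Φ, Φ, ?_, ?_, rfl, ?_⟩
    · intro Q hQ
      simp only [Finset.coe_image, Set.mem_image, Finset.mem_coe] at hQ
      obtain ⟨P, hP, rfl⟩ := hQ
      exact (hΦ1 P (hF hP) (hNle P hP)).1
    · intro Q hQ Q' hQ' hne
      simp only [Finset.coe_image, Set.mem_image, Finset.mem_coe] at hQ hQ'
      obtain ⟨P, hP, rfl⟩ := hQ
      obtain ⟨P', hP', rfl⟩ := hQ'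
      exact hΦ2 P P' (hF hP) (hNle P hP) (hF hP') (hNle P' hP') hne
    · exact fun P hP => (hΦ1 P (hF hP) (hNle P hP)).2

/-- Lemma A : Carleson-packing sum bound. -/
lemma tsum_le_of_packing (n : ℕ) (μ : Measure (EuclideanSpace ℝ (Fin n)))
    (S : Set (ℤ × (Fin n → ℤ))) (w : (ℤ × (Fin n → ℤ)) → ℝ≥0∞) (B : ℝ≥0∞)
    (h : ∀ Q ∈ S,
      (∑' P, if P ∈ S ∧ cubeOf n P ⊆ cubeOf n Q then w P else 0) ≤ B * μ (cubeOf n Q)) :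
    (∑' P, if P ∈ S then w P else 0) ≤ B * μ (⋃ Q ∈ S, cubeOf n Q) := by
  refine Summable.tsum_le_of_sum_le ENNReal.summable ?_
  intro F
  rw [← Finset.sum_filter]
  set F' := F.filter (· ∈ S) with hF'
  have hF'S : ↑F' ⊆ S := by intro P hP; simp [hF'] at hP; exact hP.2
  obtain ⟨D, Φ, hDS, hDdisj, hDim, hΦsub⟩ := finite_disjointification n S F' hF'S
  have hmaps : ∀ P ∈ F', Φ P ∈ D := by intro P hP; rw [hDim]; exact Finset.mem_image_of_mem _ hP
  calc ∑ P ∈ F', w P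
      = ∑ Q ∈ D, ∑ P ∈ F'.filter (fun P => Φ P = Q), w P :=
        (Finset.sum_fiberwise_of_maps_to hmaps _).symm
    _ ≤ ∑ Q ∈ D, B * μ (cubeOf n Q) := by
        refine Finset.sum_le_sum fun Q hQ => ?_
        refine le_trans ?_ (h Q (hDS hQ))
        have : ∀ P ∈ F'.filter (fun P => Φ P = Q), w P =
            (if P ∈ S ∧ cubeOf n P ⊆ cubeOf n Q then w P else 0) := by
          intro P hP
          simp only [Finset.mem_filter] at hP
          rw [if_pos ⟨hF'S hP.1, hP.2 ▸ hΦsub P hP.1⟩]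
        rw [Finset.sum_congr rfl this]
        exact Summable.sum_le_tsum _ (fun _ _ => zero_le) ENNReal.summable
    _ = B * ∑ Q ∈ D, μ (cubeOf n Q) := by rw [Finset.mul_sum]
    _ = B * μ (⋃ Q ∈ D, cubeOf n Q) := by
        rw [measure_biUnion_finset hDdisj (fun Q _ => measurableSet_dyadicCube n Q.1 Q.2)]
    _ ≤ B * μ (⋃ Q ∈ S, cubeOf n Q) := by
        refine mul_le_mul_right (measure_mono (Set.biUnion_subset_biUnion_left ?_)) _
        exact_mod_cast hDS

/-- Lemma B : covering bound for the measure of the union. -/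
lemma measure_biUnion_le_of_local (n : ℕ) (μ ν : Measure (EuclideanSpace ℝ (Fin n)))
    (S : Set (ℤ × (Fin n → ℤ))) (B : ℝ≥0∞)
    (h : ∀ Q ∈ S, μ (cubeOf n Q) ≤ B * ν (cubeOf n Q)) :
    μ (⋃ Q ∈ S, cubeOf n Q) ≤ B * ν Set.univ := by
  rcases S.eq_empty_or_nonempty with rfl | hSne
  · simp
  obtain ⟨e, rfl⟩ := Set.Countable.exists_eq_range (Set.to_countable _) hSne
  have hU : (⋃ Q ∈ Set.range e, cubeOf n Q) = ⋃ m : ℕ, ⋃ i ∈ Finset.range (m+1), cubeOf n (e i) := by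
    ext x
    simp only [Set.mem_iUnion, Set.mem_range, Finset.mem_range]
    constructor
    · rintro ⟨Q, ⟨i, rfl⟩, hx⟩; exact ⟨i, i, Nat.lt_succ_self i, hx⟩
    · rintro ⟨m, i, _, hx⟩; exact ⟨e i, ⟨i, rfl⟩, hx⟩
  rw [hU]
  rw [Directed.measure_iUnion]
  · refine iSup_le fun m => ?_
    set F : Finset (ℤ × (Fin n → ℤ)) := (Finset.range (m+1)).image e with hF
    have hFS : ↑F ⊆ Set.range e := by
      intro P hP; simp [hF] at hP; obtain ⟨i, _, rfl⟩ := hP; exact ⟨i, rfl⟩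
    obtain ⟨D, Φ, hDS, hDdisj, hDim, hΦsub⟩ := finite_disjointification n (Set.range e) F hFS
    have hsub : (⋃ i ∈ Finset.range (m+1), cubeOf n (e i)) ⊆ ⋃ Q ∈ D, cubeOf n Q := by
      intro x hx
      simp only [Set.mem_iUnion] at hx ⊢
      obtain ⟨i, hi, hx⟩ := hx
      have hiF : e i ∈ F := by
        simp only [hF, Finset.mem_image]
        exact ⟨i, hi, rfl⟩
      exact ⟨Φ (e i), hDim ▸ Finset.mem_image_of_mem _ hiF, hΦsub (e i) hiF hx⟩
    calc μ (⋃ i ∈ Finset.range (m+1), cubeOf n (e i)) ≤ μ (⋃ Q ∈ D, cubeOf n Q) :=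
          measure_mono hsub
      _ ≤ ∑ Q ∈ D, μ (cubeOf n Q) := measure_biUnion_finset_le _ _
      _ ≤ ∑ Q ∈ D, B * ν (cubeOf n Q) := Finset.sum_le_sum fun Q hQ => h Q (hDS hQ)
      _ = B * ∑ Q ∈ D, ν (cubeOf n Q) := by rw [Finset.mul_sum]
      _ = B * ν (⋃ Q ∈ D, cubeOf n Q) := by
          rw [measure_biUnion_finset hDdisj (fun Q _ => measurableSet_dyadicCube n Q.1 Q.2)]
      _ ≤ B * ν Set.univ := by gcongr; exact Set.subset_univ _
  · intro m m'
    refine ⟨max m m', ?_, ?_⟩ <;>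
    · intro x hx
      simp only [Set.mem_iUnion, Finset.mem_range] at hx ⊢
      obtain ⟨i, hi, hx⟩ := hx
      exact ⟨i, by omega, hx⟩
lemma layercake_scalar {t : ℝ} (ht : 0 ≤ t) :
    ENNReal.ofReal (t^2) =
      ∫⁻ l in Set.Ioi (0:ℝ), Set.indicator (Set.Ioo 0 t) (fun l => ENNReal.ofReal (2*l)) l := by
  rw [lintegral_indicator measurableSet_Ioo _, Measure.restrict_restrict measurableSet_Ioo,
    Set.inter_eq_left.mpr (fun x hx => hx.1)]
  have hint : IntegrableOn (fun l => 2*l) (Set.Ioo 0 t) volume := by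
    rw [← integrableOn_Icc_iff_integrableOn_Ioo]
    exact (continuous_const.mul continuous_id).integrableOn_Icc
  rw [← ofReal_integral_eq_lintegral_ofReal hint]
  · congr 1
    rw [← integral_Ioc_eq_integral_Ioo, ← intervalIntegral.integral_of_le ht,
      intervalIntegral.integral_const_mul, integral_id]
    ring
  · filter_upwards [ae_restrict_mem measurableSet_Ioo] with x hx
    simpa using (by nlinarith [hx.1] : (0:ℝ) ≤ 2*x)
lemma ennreal_aux {m T K : ℝ≥0∞} (h0 : m ≠ 0) (ht : m ≠ ⊤) (h : m⁻¹ * T ≤ K) : K * m ≥ T := by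
  have h2 := mul_le_mul_left h m
  rwa [mul_comm m⁻¹ T, mul_assoc, ENNReal.inv_mul_cancel h0 ht, mul_one] at h2

lemma avg_congr_ae {n : ℕ} {μ : Measure (EuclideanSpace ℝ (Fin n))} {f f₀ : _ → ℝ}
    (hae : f =ᵐ[μ] f₀) (s : Set (EuclideanSpace ℝ (Fin n))) : avg n μ s f = avg n μ s f₀ := by
  unfold avg
  rw [integral_congr_ae (ae_restrict_of_ae hae)]

lemma abs_avg_le {n : ℕ} {μ : Measure (EuclideanSpace ℝ (Fin n))} (f₀ : _ → ℝ)
    (s : Set (EuclideanSpace ℝ (Fin n))) :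
    |avg n μ s f₀| ≤ avg n μ s (fun x => |f₀ x|) := by
  unfold avg
  split_ifs with h
  · simp
  · rw [abs_div, abs_of_nonneg ENNReal.toReal_nonneg]
    rcases eq_or_lt_of_le (ENNReal.toReal_nonneg (a := μ s)) with h2 | h2
    · rw [← h2]; simp
    · rw [div_le_div_iff_of_pos_right h2]
      simpa [Real.norm_eq_abs] using norm_integral_le_integral_norm (μ := μ.restrict s) f₀
  
lemma avg_nonneg' {n : ℕ} {μ : Measure (EuclideanSpace ℝ (Fin n))} {g : _ → ℝ}
    (hg : ∀ x, 0 ≤ g x) (s : Set (EuclideanSpace ℝ (Fin n))) : 0 ≤ avg n μ s g := by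
  unfold avg
  split_ifs with h
  · exact le_refl _
  · exact div_nonneg (integral_nonneg hg) ENNReal.toReal_nonneg

/-- Per-cube bound for the level set measure. -/
lemma cube_measure_bound {n : ℕ} {μ : Measure (EuclideanSpace ℝ (Fin n))} {g : _ → ℝ}
    (hgm : Measurable g) (hgnn : ∀ x, 0 ≤ g x) (hg2 : MemLp g 2 μ)
    {l : ℝ} (hl : 0 < l) {s : Set (EuclideanSpace ℝ (Fin n))} (hsm : MeasurableSet s)
    (hQ : l < avg n μ s g) :
    μ s ≤ ENNReal.ofReal (2/l) *
      ∫⁻ x in s, (if l < 2 * g x then ENNReal.ofReal (g x) else 0) ∂μ := by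
  have h0 : μ s ≠ 0 := by
    intro h; rw [avg, if_pos h] at hQ; linarith
  have htop : μ s ≠ ⊤ := by
    intro h; rw [avg, if_neg h0, h] at hQ; simp at hQ; linarith
  set m := (μ s).toReal with hm_def
  have hm : 0 < m := ENNReal.toReal_pos h0 htop
  haveI : IsFiniteMeasure (μ.restrict s) :=
    ⟨by rw [Measure.restrict_apply_univ]; exact htop.lt_top⟩
  have hgint : Integrable g (μ.restrict s) := (hg2.restrict s).integrable (by norm_num)
  rw [avg, if_neg h0] at hQ
  have h1 : l * m < ∫ x in s, g x ∂μ := (lt_div_iff₀ hm).mp hQ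
  set g1 : _ → ℝ := fun x => if l < 2 * g x then g x else 0 with hg1_def
  set g2 : _ → ℝ := fun x => if l < 2 * g x then 0 else g x with hg2_def
  have hg1m : Measurable g1 := by
    apply Measurable.ite _ hgm measurable_const
    exact measurableSet_lt measurable_const (hgm.const_mul 2)
  have hg2m : Measurable g2 := by
    apply Measurable.ite _ measurable_const hgm
    exact measurableSet_lt measurable_const (hgm.const_mul 2)
  have hg1int : Integrable g1 (μ.restrict s) := by
    apply hgint.mono hg1m.aestronglyMeasurable
    filter_upwards with x
    rw [hg1_def]; simp only [Real.norm_eq_abs]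
    split_ifs <;> simp [abs_of_nonneg (hgnn x), hgnn x]
  have hg2int : Integrable g2 (μ.restrict s) := by
    apply hgint.mono hg2m.aestronglyMeasurable
    filter_upwards with x
    rw [hg2_def]; simp only [Real.norm_eq_abs]
    split_ifs <;> simp [abs_of_nonneg (hgnn x), hgnn x]
  have hsplit : ∫ x in s, g x ∂μ = (∫ x in s, g1 x ∂μ) + ∫ x in s, g2 x ∂μ := by
    rw [← integral_add hg1int hg2int]
    apply integral_congr_ae
    filter_upwards with x
    rw [hg1_def, hg2_def]
    simp only
    split_ifs <;> ring
  have hg2le : ∫ x in s, g2 x ∂μ ≤ (l/2) * m := by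
    have : ∫ x in s, g2 x ∂μ ≤ ∫ x in s, (l/2) ∂μ := by
      apply integral_mono hg2int (integrable_const _)
      intro x
      rw [hg2_def]
      simp only
      split_ifs with hx
      · linarith
      · push_neg at hx; linarith
    rwa [setIntegral_const, smul_eq_mul, mul_comm] at this
  have h2 : (l/2) * m < ∫ x in s, g1 x ∂μ := by linarith [hsplit ▸ h1]
  have h3 : m ≤ (2/l) * ∫ x in s, g1 x ∂μ := by
    have := mul_le_mul_of_nonneg_left h2.le (by positivity : (0:ℝ) ≤ 2/l)
    calc m = (2/l) * ((l/2) * m) := by field_simp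
      _ ≤ (2/l) * ∫ x in s, g1 x ∂μ := this
  calc μ s = ENNReal.ofReal m := (ENNReal.ofReal_toReal htop).symm
    _ ≤ ENNReal.ofReal ((2/l) * ∫ x in s, g1 x ∂μ) := ENNReal.ofReal_le_ofReal h3
    _ = ENNReal.ofReal (2/l) * ENNReal.ofReal (∫ x in s, g1 x ∂μ) := by
        rw [ENNReal.ofReal_mul (by positivity)]
    _ ≤ ENNReal.ofReal (2/l) * ∫⁻ x in s, (if l < 2 * g x then ENNReal.ofReal (g x) else 0) ∂μ := by
        gcongr
        have heq := ofReal_integral_eq_lintegral_ofReal hg1int ?_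
        · rw [heq]
          apply lintegral_mono fun x => ?_
          rw [hg1_def]
          simp only
          split_ifs <;> simp
        · filter_upwards with x
          rw [hg1_def]; simp only; split_ifs <;> simp [hgnn x]
/-- **Carleson Embedding Theorem.** For non-negative coefficients `(a_I)` over
the dyadic grid, `Σ_I a_I |⟨f⟩_I|² ≲ sup_I (μ(I)⁻¹ Σ_{J ⊆ I} a_J) ‖f‖²_{L²(μ)}`,
with an absolute constant. -/
theorem carleson_embedding :
    ∃ C : ℝ≥0∞, 0 < C ∧ C ≠ ∞ ∧
      ∀ (n : ℕ) (μ : Measure (EuclideanSpace ℝ (Fin n)))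
        (a : ℤ → (Fin n → ℤ) → ℝ≥0) (f : EuclideanSpace ℝ (Fin n) → ℝ),
        MemLp f 2 μ →
        ∑' (k : ℤ) (j : Fin n → ℤ),
            (a k j : ℝ≥0∞) * ENNReal.ofReal ((avg n μ (dyadicCube n k j) f) ^ 2) ≤
          C *
            (⨆ (k : ℤ) (j : Fin n → ℤ),
              (μ (dyadicCube n k j))⁻¹ *
                ∑' (k' : ℤ) (j' : Fin n → ℤ),
                  if dyadicCube n k' j' ⊆ dyadicCube n k j then (a k' j' : ℝ≥0∞) else 0) *
            ∫⁻ x, ENNReal.ofReal ((f x) ^ 2) ∂μ := by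
  classical
  refine ⟨8, by norm_num, by norm_num, ?_⟩
  intro n μ a f hf
  obtain ⟨f₀, hf₀m, hae⟩ : ∃ f₀ : EuclideanSpace ℝ (Fin n) → ℝ,
      StronglyMeasurable f₀ ∧ f =ᵐ[μ] f₀ :=
    ⟨hf.1.mk f, hf.1.stronglyMeasurable_mk, hf.1.ae_eq_mk⟩
  have hf₀ : MemLp f₀ 2 μ := hf.ae_eq hae
  set g : EuclideanSpace ℝ (Fin n) → ℝ := fun x => |f₀ x| with hgdef
  have hgm : Measurable g := hf₀m.measurable.abs
  have hgnn : ∀ x, 0 ≤ g x := fun x => abs_nonneg _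
  have hg2 : MemLp g 2 μ := by
    simpa [hgdef, Real.norm_eq_abs] using hf₀.norm
  set K := (⨆ (k : ℤ) (j : Fin n → ℤ),
      (μ (dyadicCube n k j))⁻¹ *
        ∑' (k' : ℤ) (j' : Fin n → ℤ),
          if dyadicCube n k' j' ⊆ dyadicCube n k j then (a k' j' : ℝ≥0∞) else 0) with hKdef
  have hll : ∫⁻ x, ENNReal.ofReal (f x ^ 2) ∂μ = ∫⁻ x, ENNReal.ofReal (g x ^ 2) ∂μ := by
    apply lintegral_congr_ae
    filter_upwards [hae] with x hx
    rw [hx, hgdef]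
    simp [sq_abs]
  rw [hll]
  set I2 := ∫⁻ x, ENNReal.ofReal (g x ^ 2) ∂μ with hI2
  set v : ℤ × (Fin n → ℤ) → ℝ := fun P => avg n μ (cubeOf n P) g with hvdef
  have hvnn : ∀ P, 0 ≤ v P := fun P => avg_nonneg' hgnn _
  set S : ℝ → Set (ℤ × (Fin n → ℤ)) := fun l => {P | l < v P} with hSdef
  set H : ℝ → EuclideanSpace ℝ (Fin n) → ℝ≥0∞ :=
    fun l x => if l < 2 * g x then ENNReal.ofReal (g x) else 0 with hHdef
  have hHm : ∀ l, Measurable (H l) := fun l => by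
    apply Measurable.ite (measurableSet_lt measurable_const (hgm.const_mul 2))
      (ENNReal.measurable_ofReal.comp hgm) measurable_const
  -- measure of cubes in S l is positive and finite
  have hmeas_pos : ∀ l, 0 < l → ∀ Q ∈ S l, μ (cubeOf n Q) ≠ 0 ∧ μ (cubeOf n Q) ≠ ⊤ := by
    intro l hl Q hQ
    have hQ' : l < avg n μ (cubeOf n Q) g := hQ
    constructor
    · intro h
      rw [avg, if_pos h] at hQ'
      linarith
    · intro h
      rw [avg, if_neg (by rw [h]; exact ENNReal.top_ne_zero), h] at hQ'
      simp at hQ'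
      linarith
  -- App1
  have fact1 : ∀ l, 0 < l →
      (∑' P : ℤ × (Fin n → ℤ), if P ∈ S l then (a P.1 P.2 : ℝ≥0∞) else 0)
        ≤ K * μ (⋃ Q ∈ S l, cubeOf n Q) := by
    intro l hl
    apply tsum_le_of_packing
    intro Q hQ
    obtain ⟨h0, htop⟩ := hmeas_pos l hl Q hQ
    have hKQ : (μ (cubeOf n Q))⁻¹ *
        (∑' (k' : ℤ) (j' : Fin n → ℤ),
          if dyadicCube n k' j' ⊆ cubeOf n Q then (a k' j' : ℝ≥0∞) else 0) ≤ K := by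
      rw [hKdef]
      exact le_iSup₂ (f := fun k j => (μ (dyadicCube n k j))⁻¹ *
        ∑' (k' : ℤ) (j' : Fin n → ℤ),
          if dyadicCube n k' j' ⊆ dyadicCube n k j then (a k' j' : ℝ≥0∞) else 0) Q.1 Q.2
    refine le_trans ?_ (ennreal_aux h0 htop hKQ)
    rw [← ENNReal.tsum_prod (f := fun k' j' =>
      if dyadicCube n k' j' ⊆ cubeOf n Q then (a k' j' : ℝ≥0∞) else 0)]
    apply Summable.tsum_le_tsum _ ENNReal.summable ENNReal.summable
    intro P
    by_cases hP : P ∈ S l ∧ cubeOf n P ⊆ cubeOf n Q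
    · rw [if_pos hP, if_pos hP.2]
    · rw [if_neg hP]
      exact zero_le
  -- App2
  have fact2 : ∀ l, 0 < l →
      μ (⋃ Q ∈ S l, cubeOf n Q) ≤ ENNReal.ofReal (2/l) * ∫⁻ x, H l x ∂μ := by
    intro l hl
    have := measure_biUnion_le_of_local n μ (μ.withDensity (H l)) (S l)
      (ENNReal.ofReal (2/l)) ?_
    · rw [withDensity_apply _ MeasurableSet.univ, Measure.restrict_univ] at this
      exact this
    · intro Q hQ
      rw [withDensity_apply _ (measurableSet_dyadicCube n Q.1 Q.2)]
      exact cube_measure_bound hgm hgnn hg2 hl (measurableSet_dyadicCube n Q.1 Q.2) hQ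
  -- main chain
  have main : (∑' (k : ℤ) (j : Fin n → ℤ),
      (a k j : ℝ≥0∞) * ENNReal.ofReal ((avg n μ (dyadicCube n k j) f) ^ 2))
      ≤ ∫⁻ l in Set.Ioi (0:ℝ), K * 4 * ∫⁻ x, H l x ∂μ := by
    rw [← ENNReal.tsum_prod (f := fun k j =>
      (a k j : ℝ≥0∞) * ENNReal.ofReal ((avg n μ (dyadicCube n k j) f) ^ 2))]
    calc ∑' P : ℤ × (Fin n → ℤ),
          (a P.1 P.2 : ℝ≥0∞) * ENNReal.ofReal ((avg n μ (dyadicCube n P.1 P.2) f) ^ 2)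
        ≤ ∑' P : ℤ × (Fin n → ℤ), (a P.1 P.2 : ℝ≥0∞) * ENNReal.ofReal (v P ^ 2) := by
          apply Summable.tsum_le_tsum _ ENNReal.summable ENNReal.summable
          intro P
          apply mul_le_mul_right
          apply ENNReal.ofReal_le_ofReal
          have e1 : avg n μ (dyadicCube n P.1 P.2) f = avg n μ (cubeOf n P) f₀ :=
            avg_congr_ae hae _
          calc (avg n μ (dyadicCube n P.1 P.2) f)^2 = |avg n μ (cubeOf n P) f₀|^2 := by
                rw [e1, sq_abs]
            _ ≤ v P ^ 2 := by
                apply pow_le_pow_left₀ (abs_nonneg _) (abs_avg_le f₀ _)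
      _ = ∑' P : ℤ × (Fin n → ℤ), ∫⁻ l in Set.Ioi (0:ℝ),
            (a P.1 P.2 : ℝ≥0∞) *
              Set.indicator (Set.Ioo 0 (v P)) (fun l => ENNReal.ofReal (2*l)) l := by
          apply tsum_congr
          intro P
          rw [layercake_scalar (hvnn P), ← lintegral_const_mul' _ _ ENNReal.coe_ne_top]
      _ = ∫⁻ l in Set.Ioi (0:ℝ), ∑' P : ℤ × (Fin n → ℤ),
            (a P.1 P.2 : ℝ≥0∞) *
              Set.indicator (Set.Ioo 0 (v P)) (fun l => ENNReal.ofReal (2*l)) l := by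
          rw [lintegral_tsum]
          intro P
          exact (((Measurable.indicator (ENNReal.measurable_ofReal.comp
            (measurable_const.mul measurable_id)) measurableSet_Ioo)).const_mul _).aemeasurable
      _ ≤ ∫⁻ l in Set.Ioi (0:ℝ), K * 4 * ∫⁻ x, H l x ∂μ := by
          apply lintegral_mono_ae
          filter_upwards [ae_restrict_mem measurableSet_Ioi] with l hl
          have hl' : (0:ℝ) < l := hl
          have hsum_eq : (∑' P : ℤ × (Fin n → ℤ),
              (a P.1 P.2 : ℝ≥0∞) *
                Set.indicator (Set.Ioo 0 (v P)) (fun l' => ENNReal.ofReal (2*l')) l)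
              = ENNReal.ofReal (2*l) *
                ∑' P : ℤ × (Fin n → ℤ), (if P ∈ S l then (a P.1 P.2 : ℝ≥0∞) else 0) := by
            rw [← ENNReal.tsum_mul_left]
            apply tsum_congr
            intro P
            rw [Set.indicator_apply]
            by_cases hP : l < v P
            · rw [if_pos (show l ∈ Set.Ioo 0 (v P) from ⟨hl', hP⟩), if_pos (show P ∈ S l from hP)]
              ring
            · rw [if_neg (fun hmem => hP hmem.2), if_neg (show P ∉ S l from hP)]
              simp
          rw [hsum_eq]
          calc ENNReal.ofReal (2*l) *
              ∑' P : ℤ × (Fin n → ℤ), (if P ∈ S l then (a P.1 P.2 : ℝ≥0∞) else 0)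
              ≤ ENNReal.ofReal (2*l) * (K * μ (⋃ Q ∈ S l, cubeOf n Q)) :=
                mul_le_mul_right (fact1 l hl') _
            _ ≤ ENNReal.ofReal (2*l) * (K * (ENNReal.ofReal (2/l) * ∫⁻ x, H l x ∂μ)) := by
                gcongr
                exact fact2 l hl'
            _ = K * (ENNReal.ofReal (2*l) * ENNReal.ofReal (2/l)) * ∫⁻ x, H l x ∂μ := by
                ring
            _ = K * 4 * ∫⁻ x, H l x ∂μ := by
                rw [← ENNReal.ofReal_mul (by positivity)]
                rw [show 2*l*(2/l) = 4 by field_simp; ring]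
                norm_num
  -- case analysis on K
  by_cases hKtop : K = ⊤
  · by_cases hI : I2 = 0
    · have hg0 : g =ᵐ[μ] 0 := by
        have hmg : Measurable fun x => ENNReal.ofReal (g x ^ 2) := (hgm.pow_const 2).ennreal_ofReal
        have h2 := (lintegral_eq_zero_iff hmg).mp hI
        filter_upwards [h2] with x hx
        simp only [Pi.zero_apply, ENNReal.ofReal_eq_zero] at hx ⊢
        nlinarith [hgnn x]
      have hHzero : ∀ l, 0 < l → (∫⁻ x, H l x ∂μ) = 0 := by
        intro l hl
        have : ∀ᵐ x ∂μ, H l x = 0 := by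
          filter_upwards [hg0] with x hx
          simp only [Pi.zero_apply] at hx
          rw [hHdef]
          simp only [hx, mul_zero]
          rw [if_neg (by linarith)]
        calc (∫⁻ x, H l x ∂μ) = ∫⁻ _, 0 ∂μ := lintegral_congr_ae this
          _ = 0 := lintegral_zero
      refine le_trans main (le_trans (le_of_eq ?_) zero_le)
      calc ∫⁻ l in Set.Ioi (0:ℝ), K * 4 * ∫⁻ x, H l x ∂μ
          = ∫⁻ l in Set.Ioi (0:ℝ), 0 := by
            apply lintegral_congr_ae
            filter_upwards [ae_restrict_mem measurableSet_Ioi] with l hl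
            rw [hHzero l hl, mul_zero]
        _ = 0 := lintegral_zero
    · rw [hKtop]
      rw [ENNReal.mul_top (by norm_num : (8:ℝ≥0∞) ≠ 0), ENNReal.top_mul hI]
      exact le_top
  · -- K finite
    refine le_trans main ?_
    rw [lintegral_const_mul' _ _ (ENNReal.mul_ne_top hKtop (by norm_num))]
    -- restrict to the support of g
    set μ' := μ.restrict {x | 0 < g x} with hμ'def
    have hressets : MeasurableSet {x | 0 < g x} := measurableSet_lt measurable_const hgm
    have hrestrict : ∀ l, 0 < l → (∫⁻ x, H l x ∂μ) = ∫⁻ x, H l x ∂μ' := by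
      intro l hl
      rw [hμ'def, ← lintegral_indicator hressets]
      apply lintegral_congr
      intro x
      rw [Set.indicator_apply]
      by_cases hx : x ∈ {x | 0 < g x}
      · rw [if_pos hx]
      · rw [if_neg hx, hHdef]
        simp only
        rw [if_neg]
        simp only [Set.mem_setOf_eq, not_lt] at hx
        linarith
    haveI : SigmaFinite μ' := by
      refine ⟨⟨⟨fun m => {x | ((m:ℝ)+1)⁻¹ < g x} ∪ {x | g x ≤ 0}, fun _ => trivial, ?_, ?_⟩⟩⟩
      · intro m
        refine lt_of_le_of_lt (measure_union_le _ _) ?_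
        have h1 : μ' {x | g x ≤ 0} = 0 := by
          rw [hμ'def, Measure.restrict_apply (measurableSet_le hgm measurable_const)]
          have he : {x | g x ≤ 0} ∩ {x | 0 < g x} = (∅ : Set (EuclideanSpace ℝ (Fin n))) := by
            ext x
            simp only [Set.mem_inter_iff, Set.mem_setOf_eq, Set.mem_empty_iff_false, iff_false,
              not_and, not_lt]
            exact fun h => h
          rw [he, measure_empty]
        rw [h1, add_zero]
        have h2 : μ {x | ((m:ℝ)+1)⁻¹ < g x} < ⊤ := by
          have hε : ((m:ℝ≥0)+1)⁻¹ ≠ 0 := by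
            apply inv_ne_zero
            exact_mod_cast Nat.succ_ne_zero m
          refine lt_of_le_of_lt (measure_mono ?_)
            (hg2.meas_ge_lt_top (by norm_num) (by norm_num) hε)
          intro x hx
          simp only [Set.mem_setOf_eq] at hx ⊢
          rw [← NNReal.coe_le_coe, coe_nnnorm, Real.norm_eq_abs, abs_of_nonneg (hgnn x)]
          push_cast
          exact hx.le
        calc μ' {x | ((m:ℝ)+1)⁻¹ < g x} ≤ μ {x | ((m:ℝ)+1)⁻¹ < g x} := by
              rw [hμ'def, Measure.restrict_apply' hressets]
              exact measure_mono Set.inter_subset_left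
          _ < ⊤ := h2
      · apply Set.eq_univ_of_forall
        intro x
        rcases le_or_gt (g x) 0 with h | h
        · exact Set.mem_iUnion.mpr ⟨0, Or.inr h⟩
        · obtain ⟨m, hm⟩ := exists_nat_gt (g x)⁻¹
          refine Set.mem_iUnion.mpr ⟨m, Or.inl ?_⟩
          simp only [Set.mem_setOf_eq]
          have h3 : (g x)⁻¹ < (m:ℝ)+1 := by linarith
          calc ((m:ℝ)+1)⁻¹ < ((g x)⁻¹)⁻¹ := by
                apply inv_strictAnti₀ (inv_pos.mpr h) h3
            _ = g x := inv_inv _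
    have hswap : (∫⁻ l in Set.Ioi (0:ℝ), ∫⁻ x, H l x ∂μ) ≤ 2 * I2 := by
      calc (∫⁻ l in Set.Ioi (0:ℝ), ∫⁻ x, H l x ∂μ)
          = ∫⁻ l in Set.Ioi (0:ℝ), ∫⁻ x, H l x ∂μ' := by
            apply lintegral_congr_ae
            filter_upwards [ae_restrict_mem measurableSet_Ioi] with l hl
            exact hrestrict l hl
        _ = ∫⁻ x, (∫⁻ l in Set.Ioi (0:ℝ), H l x) ∂μ' := by
            apply lintegral_lintegral_swap
            apply Measurable.aemeasurable
            apply Measurable.ite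
            · exact measurableSet_lt measurable_fst ((hgm.comp measurable_snd).const_mul 2)
            · exact ENNReal.measurable_ofReal.comp (hgm.comp measurable_snd)
            · exact measurable_const
        _ = ∫⁻ x, 2 * ENNReal.ofReal (g x ^ 2) ∂μ' := by
            apply lintegral_congr
            intro x
            have : (fun l => H l x) = Set.indicator (Set.Iio (2 * g x))
                (fun _ => ENNReal.ofReal (g x)) := by
              funext l
              rw [hHdef, Set.indicator_apply]
              simp [Set.mem_Iio]
            rw [this, lintegral_indicator measurableSet_Iio, setLIntegral_const,
              Measure.restrict_apply measurableSet_Iio, Set.Iio_inter_Ioi,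
              Real.volume_Ioo, sub_zero]
            rw [← ENNReal.ofReal_mul (hgnn x), show g x * (2 * g x) = 2 * g x ^2 by ring,
              ENNReal.ofReal_mul (by norm_num : (0:ℝ) ≤ 2)]
            norm_num
        _ = 2 * ∫⁻ x, ENNReal.ofReal (g x ^ 2) ∂μ' := by
            rw [lintegral_const_mul' _ _ (by norm_num)]
        _ ≤ 2 * I2 := by
            gcongr
            rw [hI2, hμ'def]
            exact lintegral_mono' Measure.restrict_le_self (le_refl _)
    calc K * 4 * ∫⁻ l in Set.Ioi (0:ℝ), ∫⁻ x, H l x ∂μ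
        ≤ K * 4 * (2 * I2) := mul_le_mul_right hswap _
      _ = 8 * K * I2 := by ring
end
end

section
/- Fix n ≥ 1 and a dyadic cube structure on ℝⁿ. Given a cube I, let 𝒲(I) be the Whitney family of maximal dyadic cubes S ⊊ I with 3S ⊂ I and inrdist(S,I) > 1. Then the doubled cubes {2S : S ∈ 𝒲(I)} have uniformly bounded overlap: every point x ∈ I belongs to at most 12·3ⁿ of the cubes 2S, S ∈ 𝒲(I). Consequently Σ_{S∈𝒲(I)} μ(2S) ≲_n μ(I) for any positive measure μ. -/
open MeasureTheory
open scoped ENNReal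

noncomputable section

/-- The position of the dyadic parent: the parent of the cube `(k, j)` is `(k-1, parentIdx j)`. -/
def parentIdx {n : ℕ} (j : Fin n → ℤ) : Fin n → ℤ := fun i => j i / 2

/-- The position of the child of the cube `(k, j)` selected by `b : Fin n → Bool`. -/
def childIdx {n : ℕ} (j : Fin n → ℤ) (b : Fin n → Bool) : Fin n → ℤ :=
  fun i => 2 * j i + (if b i then 1 else 0)

/-- The inner boundary `𝔇_I` of a dyadic cube: the union of the boundaries of its children. -/
def innerBd (n : ℕ) (k : ℤ) (j : Fin n → ℤ) : Set (EuclideanSpace ℝ (Fin n)) :=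
  ⋃ b : Fin n → Bool, frontier (dyadicCube n (k+1) (childIdx j b))

/-- The concentric dilate `λS` of the dyadic cube `S = (k, j)` by the factor `lam`. -/
def dilateCube (n : ℕ) (lam : ℝ) (k : ℤ) (j : Fin n → ℤ) :
    Set (EuclideanSpace ℝ (Fin n)) :=
  {x | ∀ i, |x i - (2:ℝ) ^ (-k) * ((j i : ℝ) + 1/2)| ≤ lam * (2:ℝ) ^ (-k) / 2}

/-- The distance between two sets. -/
def setDist {X : Type*} [PseudoMetricSpace X] (s t : Set X) : ℝ :=
  sInf {d | ∃ x ∈ s, ∃ y ∈ t, d = dist x y}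

/-- The defining property of the Whitney family of `I = (kI, jI)`: `S ⊊ I`, `3S ⊂ I` and
`inrdist(S, I) > 1`, i.e. `dist(S, 𝔇_I) > 0`. -/
def whitneyProp (n : ℕ) (kI : ℤ) (jI : Fin n → ℤ) (k : ℤ) (j : Fin n → ℤ) : Prop :=
  dyadicCube n k j ⊂ dyadicCube n kI jI ∧
    dilateCube n 3 k j ⊆ dyadicCube n kI jI ∧
    0 < setDist (dyadicCube n k j) (innerBd n kI jI)

/-- Membership in the Whitney family `𝒲(I)`: `S` satisfies the Whitney property and is
maximal, i.e. its dyadic parent does not. -/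
def whitney (n : ℕ) (kI : ℤ) (jI : Fin n → ℤ) (k : ℤ) (j : Fin n → ℤ) : Prop :=
  whitneyProp n kI jI k j ∧ ¬ whitneyProp n kI jI (k-1) (parentIdx j)

namespace WhitAux
variable {n : ℕ}

def upd (x : EuclideanSpace ℝ (Fin n)) (i : Fin n) (t : ℝ) : EuclideanSpace ℝ (Fin n) :=
  WithLp.toLp 2 (fun i' => if i' = i then t else x i')

@[simp] lemma upd_same (x : EuclideanSpace ℝ (Fin n)) (i : Fin n) (t : ℝ) : upd x i t i = t := by
  simp [upd]

lemma upd_ne (x : EuclideanSpace ℝ (Fin n)) {i i' : Fin n} (t : ℝ) (h : i' ≠ i) :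
    upd x i t i' = x i' := by simp [upd, h]

lemma coord_dist (x y : EuclideanSpace ℝ (Fin n)) (i : Fin n) : |x i - y i| ≤ dist x y := by
  rw [EuclideanSpace.dist_eq]
  have h1 : |x i - y i| = Real.sqrt ((x i - y i)^2) := (Real.sqrt_sq_eq_abs _).symm
  rw [h1]
  apply Real.sqrt_le_sqrt
  have := Finset.single_le_sum (f := fun i' => dist (x i') (y i') ^ 2)
    (fun i' _ => sq_nonneg _) (Finset.mem_univ i)
  simpa [Real.dist_eq] using this

lemma dist_upd_upd (x : EuclideanSpace ℝ (Fin n)) (i : Fin n) (a b : ℝ) :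
    dist (upd x i a) (upd x i b) = |a - b| := by
  rw [EuclideanSpace.dist_eq]
  rw [Finset.sum_eq_single i]
  · simp [Real.dist_eq, Real.sqrt_sq_eq_abs]
  · intro i' _ h
    simp [upd_ne _ _ h]
  · simp

lemma dist_upd (x : EuclideanSpace ℝ (Fin n)) (i : Fin n) (b : ℝ) :
    dist x (upd x i b) = |x i - b| := by
  have h : x = upd x i (x i) := by
    ext i'; by_cases h : i' = i
    · subst h; simp [upd]
    · simp [upd, h]
  nth_rewrite 1 [h]
  rw [dist_upd_upd]

lemma continuous_coord (i : Fin n) : Continuous (fun x : EuclideanSpace ℝ (Fin n) => x i) := by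
  apply LipschitzWith.continuous (K := 1)
  apply LipschitzWith.of_dist_le_mul
  intro x y
  simpa [Real.dist_eq] using coord_dist x y i

lemma isClosed_box (a b : Fin n → ℝ) :
    IsClosed {x : EuclideanSpace ℝ (Fin n) | ∀ i, a i ≤ x i ∧ x i ≤ b i} := by
  have : {x : EuclideanSpace ℝ (Fin n) | ∀ i, a i ≤ x i ∧ x i ≤ b i}
      = ⋂ i, (fun x : EuclideanSpace ℝ (Fin n) => x i) ⁻¹' (Set.Icc (a i) (b i)) := by
    ext x; simp [Set.mem_iInter, Set.mem_Icc]
  rw [this]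
  exact isClosed_iInter fun i => (isClosed_Icc).preimage (continuous_coord i)

lemma isOpen_box (a b : Fin n → ℝ) :
    IsOpen {x : EuclideanSpace ℝ (Fin n) | ∀ i, a i < x i ∧ x i < b i} := by
  have : {x : EuclideanSpace ℝ (Fin n) | ∀ i, a i < x i ∧ x i < b i}
      = ⋂ i, (fun x : EuclideanSpace ℝ (Fin n) => x i) ⁻¹' (Set.Ioo (a i) (b i)) := by
    ext x; simp [Set.mem_iInter, Set.mem_Ioo]
  rw [this]
  exact isOpen_iInter_of_finite fun i => (isOpen_Ioo).preimage (continuous_coord i)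


lemma mem_dyadicCube_iff {k : ℤ} {j : Fin n → ℤ} {x : EuclideanSpace ℝ (Fin n)} :
    x ∈ dyadicCube n k j ↔
      ∀ i, (2:ℝ) ^ (-k) * (j i : ℝ) ≤ x i ∧ x i < (2:ℝ) ^ (-k) * ((j i : ℝ) + 1) := Iff.rfl

lemma mem_dilateCube_iff {lam : ℝ} {k : ℤ} {j : Fin n → ℤ} {x : EuclideanSpace ℝ (Fin n)} :
    x ∈ dilateCube n lam k j ↔
      ∀ i, |x i - (2:ℝ) ^ (-k) * ((j i : ℝ) + 1/2)| ≤ lam * (2:ℝ) ^ (-k) / 2 := Iff.rfl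

lemma frontier_cube_subset {K : ℤ} {J : Fin n → ℤ} {y : EuclideanSpace ℝ (Fin n)}
    (hy : y ∈ frontier (dyadicCube n K J)) :
    (∀ i, (2:ℝ)^(-K) * (J i : ℝ) ≤ y i ∧ y i ≤ (2:ℝ)^(-K) * ((J i : ℝ) + 1)) ∧
      ∃ i1, y i1 = (2:ℝ)^(-K) * (J i1 : ℝ) ∨ y i1 = (2:ℝ)^(-K) * ((J i1 : ℝ) + 1) := by
  have hclosed : ∀ i, (2:ℝ)^(-K) * (J i : ℝ) ≤ y i ∧ y i ≤ (2:ℝ)^(-K) * ((J i : ℝ) + 1) := by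
    have hsub : closure (dyadicCube n K J) ⊆ {x : EuclideanSpace ℝ (Fin n) |
        ∀ i, (2:ℝ)^(-K) * (J i : ℝ) ≤ x i ∧ x i ≤ (2:ℝ)^(-K) * ((J i : ℝ) + 1)} := by
      apply closure_minimal _ (isClosed_box _ _)
      intro x hx i; exact ⟨(hx i).1, le_of_lt (hx i).2⟩
    exact hsub hy.1
  refine ⟨hclosed, ?_⟩
  have hni : y ∉ interior (dyadicCube n K J) := hy.2
  have hopen : ¬ (∀ i, (2:ℝ)^(-K) * (J i : ℝ) < y i ∧ y i < (2:ℝ)^(-K) * ((J i : ℝ) + 1)) := by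
    intro h
    have hsub : {x : EuclideanSpace ℝ (Fin n) |
        ∀ i, (2:ℝ)^(-K) * (J i : ℝ) < x i ∧ x i < (2:ℝ)^(-K) * ((J i : ℝ) + 1)}
        ⊆ interior (dyadicCube n K J) :=
      interior_maximal (fun x hx i => ⟨le_of_lt (hx i).1, (hx i).2⟩) (isOpen_box _ _)
    exact hni (hsub h)
  obtain ⟨i1, h1⟩ := not_forall.mp hopen
  refine ⟨i1, ?_⟩
  rcases eq_or_lt_of_le (hclosed i1).1 with h | h
  · exact Or.inl h.symm
  · rcases eq_or_lt_of_le (hclosed i1).2 with h' | h'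
    · exact Or.inr h'
    · exact absurd ⟨h, h'⟩ h1

lemma mem_frontier_left {K : ℤ} {J : Fin n → ℤ} {z : EuclideanSpace ℝ (Fin n)} {i1 : Fin n}
    (hz : z ∈ dyadicCube n K J) (h1 : z i1 = (2:ℝ)^(-K) * (J i1 : ℝ)) :
    z ∈ frontier (dyadicCube n K J) := by
  constructor
  · exact subset_closure hz
  · intro hint
    rw [mem_interior_iff_mem_nhds, Metric.mem_nhds_iff] at hint
    obtain ⟨ε, hε, hball⟩ := hint
    have hmem : upd z i1 (z i1 - ε/2) ∈ dyadicCube n K J := by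
      apply hball
      rw [Metric.mem_ball, dist_comm, dist_upd]
      have : z i1 - (z i1 - ε/2) = ε/2 := by ring
      rw [this, abs_of_pos (by linarith)]
      linarith
    have h2 := (mem_dyadicCube_iff.mp hmem i1).1
    rw [upd_same, h1] at h2
    linarith

lemma mem_frontier_right {K : ℤ} {J : Fin n → ℤ} {z : EuclideanSpace ℝ (Fin n)} {i1 : Fin n}
    (hz : ∀ i, i ≠ i1 → ((2:ℝ)^(-K) * (J i : ℝ) ≤ z i ∧ z i < (2:ℝ)^(-K) * ((J i : ℝ) + 1)))
    (h1 : z i1 = (2:ℝ)^(-K) * ((J i1 : ℝ) + 1)) :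
    z ∈ frontier (dyadicCube n K J) := by
  have hu : (0:ℝ) < (2:ℝ)^(-K) := by positivity
  constructor
  · rw [Metric.mem_closure_iff]
    intro ε hε
    set δ := min (ε/2) ((2:ℝ)^(-K)/2) with hδdef
    have hδpos : 0 < δ := lt_min (by linarith) (by linarith)
    refine ⟨upd z i1 (z i1 - δ), ?_, ?_⟩
    · intro i
      by_cases h : i = i1
      · subst h
        rw [upd_same, h1]
        constructor
        · have : δ ≤ (2:ℝ)^(-K) := le_trans (min_le_right _ _) (by linarith)
          nlinarith
        · nlinarith
      · rw [upd_ne _ _ h]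
        exact ⟨(hz i h).1, (hz i h).2⟩
    · rw [dist_upd]
      have : z i1 - (z i1 - δ) = δ := by ring
      rw [this, abs_of_pos hδpos]
      calc δ ≤ ε/2 := min_le_left _ _
        _ < ε := by linarith
  · intro hint
    have h2 := (mem_dyadicCube_iff.mp (interior_subset hint) i1).2
    rw [h1] at h2
    linarith

lemma mem_innerBd_of {kI : ℤ} {jI : Fin n → ℤ} {b : Fin n → Bool}
    {z : EuclideanSpace ℝ (Fin n)} (h : z ∈ frontier (dyadicCube n (kI+1) (childIdx jI b))) :
    z ∈ innerBd n kI jI := Set.mem_iUnion.mpr ⟨b, h⟩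

lemma ctr_mem {k : ℤ} {j : Fin n → ℤ} :
    (WithLp.toLp 2 (fun i => (2:ℝ)^(-k) * ((j i : ℝ) + 1/2)) : EuclideanSpace ℝ (Fin n)) ∈ dyadicCube n k j := by
  intro i
  simp only [PiLp.toLp_apply]
  have hu : (0:ℝ) < (2:ℝ)^(-k) := by positivity
  constructor
  · nlinarith
  · nlinarith

lemma cube_nested {k k' : ℤ} {j j' : Fin n → ℤ} (hk : k ≤ k')
    (hne : (dyadicCube n k' j' ∩ dyadicCube n k j).Nonempty) :
    dyadicCube n k' j' ⊆ dyadicCube n k j := by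
  obtain ⟨x, hx', hx⟩ := hne
  have hu' : (0:ℝ) < (2:ℝ)^(-k') := by positivity
  set M : ℤ := 2 ^ (k' - k).toNat with hMdef
  have hMu : (2:ℝ)^(-k) = (2:ℝ)^(-k') * (M:ℝ) := by
    have h1 : ((M:ℤ):ℝ) = (2:ℝ) ^ ((k' - k).toNat) := by
      rw [hMdef]; push_cast; norm_num
    rw [h1, ← zpow_natCast (2:ℝ) ((k' - k).toNat), Int.toNat_of_nonneg (by omega),
      ← zpow_add₀ (by norm_num : (2:ℝ) ≠ 0)]
    congr 1; ring
  intro y hy i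
  have hx'i := hx' i
  have hxi := hx i
  have hyi := hy i
  rw [hMu] at hxi ⊢
  set u' := (2:ℝ)^(-k') with hu'def
  set m : ℤ := j' i
  set p : ℤ := j i
  -- integer comparisons
  have hA : (M:ℝ) * (p:ℝ) < (m:ℝ) + 1 := by
    have h3 : u' * ((M:ℝ) * (p:ℝ)) < u' * ((m:ℝ)+1) := by
      have := lt_of_le_of_lt hxi.1 hx'i.2
      nlinarith
    exact (mul_lt_mul_iff_right₀ hu').mp h3
  have hA' : M * p ≤ m := by
    have : M * p < m + 1 := by exact_mod_cast hA
    omega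
  have hB : (m:ℝ) < (M:ℝ) * ((p:ℝ) + 1) := by
    have h3 : u' * (m:ℝ) < u' * ((M:ℝ) * ((p:ℝ)+1)) := by
      have := lt_of_le_of_lt hx'i.1 hxi.2
      nlinarith
    exact (mul_lt_mul_iff_right₀ hu').mp h3
  have hB' : m + 1 ≤ M * (p + 1) := by
    have : m < M * (p + 1) := by exact_mod_cast hB
    omega
  constructor
  · have hc : ((M * p : ℤ):ℝ) ≤ (m:ℝ) := by exact_mod_cast hA'
    push_cast at hc
    nlinarith [hyi.1]
  · have hc : ((m + 1 : ℤ):ℝ) ≤ ((M * (p+1) : ℤ):ℝ) := by exact_mod_cast hB'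
    push_cast at hc
    nlinarith [hyi.2]


lemma zpow_two_lt_iff {a b : ℤ} : (2:ℝ)^a < (2:ℝ)^b ↔ a < b := by
  exact zpow_lt_zpow_iff_right₀ (by norm_num)

lemma corner_mem {k : ℤ} {j : Fin n → ℤ} :
    (WithLp.toLp 2 (fun i => (2:ℝ)^(-k) * (j i : ℝ)) : EuclideanSpace ℝ (Fin n)) ∈ dyadicCube n k j := by
  intro i
  simp only [PiLp.toLp_apply]
  have hu : (0:ℝ) < (2:ℝ)^(-k) := by positivity
  refine ⟨le_refl _, ?_⟩
  show (2:ℝ)^(-k) * (j i : ℝ) < _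
  nlinarith

lemma scale_lt {kI k : ℤ} {jI : Fin n → ℤ} {j : Fin n → ℤ}
    (h : dyadicCube n k j ⊂ dyadicCube n kI jI) : kI < k := by
  by_contra hc
  push_neg at hc
  have hne : (dyadicCube n kI jI ∩ dyadicCube n k j).Nonempty :=
    ⟨_, h.1 ctr_mem, ctr_mem⟩
  exact h.2 (cube_nested hc hne)

lemma subset_parent {k : ℤ} {j : Fin n → ℤ} :
    dyadicCube n k j ⊆ dyadicCube n (k-1) (parentIdx j) := by
  intro y hy i
  have hu : (0:ℝ) < (2:ℝ)^(-k) := by positivity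
  have h2u : (2:ℝ)^(-(k-1)) = 2 * (2:ℝ)^(-k) := by
    rw [show -(k-1) = (-k) + 1 by ring, zpow_add_one₀ (by norm_num : (2:ℝ) ≠ 0)]
    ring
  have hdm := Int.mul_ediv_add_emod (j i) 2
  have hr := Int.emod_two_eq (j i)
  have hyi := hy i
  rw [h2u]
  unfold parentIdx
  have hj : (j i : ℝ) = 2 * ((j i / 2 : ℤ) : ℝ) + ((j i % 2 : ℤ) : ℝ) := by
    exact_mod_cast hdm.symm
  rcases hr with hr | hr <;> rw [hr] at hj <;> push_cast at hj <;>
    constructor <;> nlinarith [hyi.1, hyi.2]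

lemma mem_child {kI : ℤ} {jI : Fin n → ℤ} {x : EuclideanSpace ℝ (Fin n)}
    (hx : x ∈ dyadicCube n kI jI) :
    ∃ b : Fin n → Bool, x ∈ dyadicCube n (kI+1) (childIdx jI b) := by
  have hu' : (0:ℝ) < (2:ℝ)^(-(kI+1)) := by positivity
  have h2u : (2:ℝ)^(-kI) = 2 * (2:ℝ)^(-(kI+1)) := by
    rw [show -kI = (-(kI+1)) + 1 by ring, zpow_add_one₀ (by norm_num : (2:ℝ) ≠ 0)]
    ring
  classical
  set b : Fin n → Bool := fun i => decide ((2:ℝ)^(-(kI+1)) * (2*(jI i:ℝ) + 1) ≤ x i) with hb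
  refine ⟨b, fun i => ?_⟩
  have hxi := hx i
  rw [h2u] at hxi
  unfold childIdx
  by_cases hc : (2:ℝ)^(-(kI+1)) * (2*(jI i:ℝ) + 1) ≤ x i
  · have hbi : b i = true := decide_eq_true hc
    rw [hbi]
    simp only [reduceIte]
    push_cast
    constructor <;> nlinarith [hxi.1, hxi.2]
  · have hbi : b i = false := decide_eq_false hc
    rw [hbi]
    simp only [Bool.false_eq_true, reduceIte]
    push_cast
    constructor <;> nlinarith [hxi.1, hxi.2, not_le.mp hc]

lemma grid_eq {K : ℤ} {J m : ℤ} {v : ℝ}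
    (hv1 : (2:ℝ)^(-K) * (J:ℝ) ≤ v) (hv2 : v < (2:ℝ)^(-K) * ((J:ℝ)+1))
    (hm : v = (2:ℝ)^(-K) * (m:ℝ)) : m = J := by
  have hu : (0:ℝ) < (2:ℝ)^(-K) := by positivity
  rw [hm] at hv1 hv2
  have h1 : (J:ℝ) ≤ (m:ℝ) := by nlinarith
  have h2 : (m:ℝ) < (J:ℝ) + 1 := by nlinarith
  have h1' : J ≤ m := by exact_mod_cast h1
  have h2' : m < J + 1 := by exact_mod_cast h2
  omega


lemma setDist_le' {X : Type*} [PseudoMetricSpace X] {s t : Set X} {x y : X}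
    (hx : x ∈ s) (hy : y ∈ t) : setDist s t ≤ dist x y := by
  apply csInf_le
  · refine ⟨0, ?_⟩
    rintro d ⟨a, _, b, _, rfl⟩
    exact dist_nonneg
  · exact ⟨x, hx, y, hy, rfl⟩

set_option maxHeartbeats 1000000 in
lemma lower_bound {kI k : ℤ} {jI j : Fin n → ℤ} (hw : whitneyProp n kI jI k j)
    {x y : EuclideanSpace ℝ (Fin n)} (hx : x ∈ dilateCube n 2 k j) (hy : y ∈ innerBd n kI jI) :
    (2:ℝ)^(-k)/2 ≤ dist x y := by
  have hu : (0:ℝ) < (2:ℝ)^(-k) := by positivity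
  have hu' : (0:ℝ) < (2:ℝ)^(-(kI+1)) := by positivity
  by_contra hlt
  push_neg at hlt
  have hkk : kI < k := scale_lt hw.1
  obtain ⟨b2, hyfr⟩ := Set.mem_iUnion.mp hy
  obtain ⟨hcl, i1, ht⟩ := frontier_cube_subset hyfr
  obtain ⟨mm, hmm⟩ : ∃ mm : ℤ, y i1 = (2:ℝ)^(-(kI+1)) * (mm:ℝ) := by
    rcases ht with h | h
    · exact ⟨childIdx jI b2 i1, h⟩
    · exact ⟨childIdx jI b2 i1 + 1, by rw [h]; push_cast; ring⟩
  set M : ℤ := 2 ^ (k - (kI+1)).toNat with hMdef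
  have hMu : (2:ℝ)^(-(kI+1)) = (2:ℝ)^(-k) * (M:ℝ) := by
    have h1 : ((M:ℤ):ℝ) = (2:ℝ) ^ ((k - (kI+1)).toNat) := by rw [hMdef]; push_cast; norm_num
    rw [h1, ← zpow_natCast (2:ℝ) _, Int.toNat_of_nonneg (by omega),
      ← zpow_add₀ (by norm_num : (2:ℝ) ≠ 0)]
    congr 1; ring
  set m' : ℤ := mm * M with hm'def
  have hym' : y i1 = (2:ℝ)^(-k) * (m':ℝ) := by rw [hmm, hMu, hm'def]; push_cast; ring
  set c : EuclideanSpace ℝ (Fin n) := WithLp.toLp 2 (fun i => (2:ℝ)^(-k) * ((j i:ℝ) + 1/2)) with hcdef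
  have hcS : c ∈ dyadicCube n k j := by rw [hcdef]; exact ctr_mem
  have hci : ∀ i, c i = (2:ℝ)^(-k) * ((j i:ℝ) + 1/2) := fun i => rfl
  have hxc : |x i1 - (2:ℝ)^(-k) * ((j i1:ℝ) + 1/2)| ≤ (2:ℝ)^(-k) := by
    have := hx i1; linarith
  have hxy1 : |x i1 - y i1| ≤ dist x y := coord_dist x y i1
  have hyc : |y i1 - (2:ℝ)^(-k) * ((j i1:ℝ) + 1/2)| < 3*(2:ℝ)^(-k)/2 := by
    calc |y i1 - (2:ℝ)^(-k) * ((j i1:ℝ)+1/2)|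
        ≤ |y i1 - x i1| + |x i1 - (2:ℝ)^(-k) * ((j i1:ℝ)+1/2)| := abs_sub_le _ _ _
      _ < 3*(2:ℝ)^(-k)/2 := by rw [abs_sub_comm]; linarith
  have hm'j : m' = j i1 ∨ m' = j i1 + 1 := by
    rw [hym', abs_lt] at hyc
    have h2 : (m':ℝ) < (j i1:ℝ) + 2 := by nlinarith [hyc.1, hyc.2]
    have h3 : (j i1:ℝ) - 1 < (m':ℝ) := by nlinarith [hyc.1, hyc.2]
    have h2' : m' < j i1 + 2 := by exact_mod_cast h2
    have h3' : j i1 - 1 < m' := by exact_mod_cast h3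
    omega
  set z := upd c i1 (y i1) with hzdef
  have hz3 : z ∈ dilateCube n 3 k j := by
    intro i
    by_cases h : i = i1
    · subst h
      rw [hzdef, upd_same]
      linarith [hyc]
    · rw [hzdef, upd_ne _ _ h, hci i]
      simp only [sub_self, abs_zero]
      positivity
  have hzI : z ∈ dyadicCube n kI jI := hw.2.1 hz3
  obtain ⟨b3, hzc⟩ := mem_child hzI
  have hz_mm : z i1 = (2:ℝ)^(-(kI+1)) * (mm:ℝ) := by rw [hzdef, upd_same, hmm]
  have hmm_eq : mm = childIdx jI b3 i1 := grid_eq (hzc i1).1 (hzc i1).2 hz_mm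
  have hz_end : z i1 = (2:ℝ)^(-(kI+1)) * ((childIdx jI b3 i1 : ℤ):ℝ) := by
    rw [hz_mm, hmm_eq]
  have hzfr : z ∈ innerBd n kI jI := mem_innerBd_of (mem_frontier_left hzc hz_end)
  have hsd := hw.2.2
  rcases hm'j with hcase | hcase
  · have hzS : z ∈ dyadicCube n k j := by
      intro i
      by_cases h : i = i1
      · subst h
        rw [hzdef, upd_same, hym', hcase]
        constructor
        · exact le_refl _
        · nlinarith
      · rw [hzdef, upd_ne _ _ h, hci i]
        constructor <;> nlinarith [hu]
    have h0 : setDist (dyadicCube n k j) (innerBd n kI jI) ≤ 0 := by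
      have := setDist_le' hzS hzfr
      simpa using this
    linarith
  · set sd := setDist (dyadicCube n k j) (innerBd n kI jI) with hsddef
    set δ := min (sd/2) ((2:ℝ)^(-k)/2) with hδdef
    have hδ : 0 < δ := lt_min (by linarith) (by linarith)
    have hδu : δ ≤ (2:ℝ)^(-k)/2 := min_le_right _ _
    have hsS : upd c i1 (y i1 - δ) ∈ dyadicCube n k j := by
      intro i
      by_cases h : i = i1
      · subst h
        rw [upd_same, hym', hcase]
        push_cast
        constructor <;> nlinarith [hu, hδ, hδu]
      · rw [upd_ne _ _ h, hci i]
        constructor <;> nlinarith [hu]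
    have hd : dist (upd c i1 (y i1 - δ)) z = δ := by
      rw [hzdef]
      have : z = upd c i1 (y i1) := hzdef
      rw [dist_upd_upd]
      have h1 : y i1 - δ - y i1 = -δ := by ring
      rw [h1, abs_neg, abs_of_pos hδ]
    have h2 : sd ≤ δ := by
      have := setDist_le' hsS hzfr
      rw [hd] at this
      exact this
    have h3 : δ ≤ sd/2 := min_le_left _ _
    linarith


set_option maxHeartbeats 1600000 in
lemma upper_bound {kI k : ℤ} {jI j : Fin n → ℤ} (hnw : whitney n kI jI k j)
    {x : EuclideanSpace ℝ (Fin n)} (hx : x ∈ dilateCube n 2 k j)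
    (hxI : x ∈ dyadicCube n kI jI) :
    ∃ y ∈ innerBd n kI jI, dist x y ≤ 5 * (2:ℝ)^(-k) := by
  have hu : (0:ℝ) < (2:ℝ)^(-k) := by positivity
  have hu' : (0:ℝ) < (2:ℝ)^(-(kI+1)) := by positivity
  have hkk : kI < k := scale_lt hnw.1.1
  have h2u : (2:ℝ)^(-(k-1)) = 2 * (2:ℝ)^(-k) := by
    rw [show -(k-1) = (-k) + 1 by ring, zpow_add_one₀ (by norm_num : (2:ℝ) ≠ 0)]; ring
  have h2u' : (2:ℝ)^(-kI) = 2 * (2:ℝ)^(-(kI+1)) := by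
    rw [show -kI = (-(kI+1)) + 1 by ring, zpow_add_one₀ (by norm_num : (2:ℝ) ≠ 0)]; ring
  obtain ⟨b, hb⟩ := mem_child hxI
  have hnFin : Nonempty (Fin n) := by
    by_contra hemp
    apply hnw.1.1.2
    intro w _ i
    exact absurd ⟨i⟩ hemp
  obtain ⟨i0⟩ := hnFin
  have bdmem : ∀ (i1 : Fin n) (e : ℝ),
      (e = (2:ℝ)^(-(kI+1)) * ((childIdx jI b i1 : ℤ):ℝ) ∨
       e = (2:ℝ)^(-(kI+1)) * (((childIdx jI b i1 : ℤ):ℝ) + 1)) →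
      upd x i1 e ∈ innerBd n kI jI := by
    intro i1 e he
    apply mem_innerBd_of (b := b)
    rcases he with he | he
    · apply mem_frontier_left (i1 := i1)
      · intro i
        by_cases h : i = i1
        · subst h
          rw [upd_same, he]
          refine ⟨le_refl _, ?_⟩
          nlinarith [hu']
        · rw [upd_ne _ _ h]; exact hb i
      · rw [upd_same, he]
    · apply mem_frontier_right (i1 := i1)
      · intro i hi
        rw [upd_ne _ _ hi]; exact hb i
      · rw [upd_same, he]
  have key : ∀ (i1 : Fin n) (e : ℝ),
      (e = (2:ℝ)^(-(kI+1)) * ((childIdx jI b i1 : ℤ):ℝ) ∨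
       e = (2:ℝ)^(-(kI+1)) * (((childIdx jI b i1 : ℤ):ℝ) + 1)) →
      |x i1 - e| ≤ 5 * (2:ℝ)^(-k) → ∃ y ∈ innerBd n kI jI, dist x y ≤ 5 * (2:ℝ)^(-k) := by
    intro i1 e he hbound
    refine ⟨upd x i1 e, bdmem i1 e he, ?_⟩
    rw [dist_upd]; exact hbound
  set c : EuclideanSpace ℝ (Fin n) := WithLp.toLp 2 (fun i => (2:ℝ)^(-k) * ((j i:ℝ) + 1/2)) with hcdef
  have hcS : c ∈ dyadicCube n k j := by rw [hcdef]; exact ctr_mem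
  have hcP : c ∈ dyadicCube n (k-1) (parentIdx j) := subset_parent hcS
  have hci : ∀ i, c i = (2:ℝ)^(-k) * ((j i:ℝ) + 1/2) := fun i => rfl
  have hnp := hnw.2
  by_cases hA : dyadicCube n (k-1) (parentIdx j) ⊂ dyadicCube n kI jI
  · by_cases hB : dilateCube n 3 (k-1) (parentIdx j) ⊆ dyadicCube n kI jI
    · -- Case C
      have hC : setDist (dyadicCube n (k-1) (parentIdx j)) (innerBd n kI jI) ≤ 0 :=
        le_of_not_gt (fun h => hnp ⟨hA, hB, h⟩)
      have hDne : {d : ℝ | ∃ p ∈ dyadicCube n (k-1) (parentIdx j), ∃ y ∈ innerBd n kI jI,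
          d = dist p y}.Nonempty :=
        ⟨dist c (upd x i0 ((2:ℝ)^(-(kI+1)) * ((childIdx jI b i0 : ℤ):ℝ))), c, hcP,
          _, bdmem i0 _ (Or.inl rfl), rfl⟩
      have hDbdd : BddBelow {d : ℝ | ∃ p ∈ dyadicCube n (k-1) (parentIdx j),
          ∃ y ∈ innerBd n kI jI, d = dist p y} := by
        refine ⟨0, ?_⟩
        rintro d ⟨p, _, yy, _, rfl⟩
        exact dist_nonneg
      have hlt : setDist (dyadicCube n (k-1) (parentIdx j)) (innerBd n kI jI) < (2:ℝ)^(-k) :=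
        lt_of_le_of_lt hC hu
      rw [setDist] at hlt
      obtain ⟨d, ⟨p, hp, yy, hyy, rfl⟩, hdlt⟩ := (csInf_lt_iff hDbdd hDne).mp hlt
      obtain ⟨b2, hyfr⟩ := Set.mem_iUnion.mp hyy
      obtain ⟨hcl2, i1, ht⟩ := frontier_cube_subset hyfr
      obtain ⟨mm, hmm⟩ : ∃ mm : ℤ, yy i1 = (2:ℝ)^(-(kI+1)) * (mm:ℝ) := by
        rcases ht with h | h
        · exact ⟨childIdx jI b2 i1, h⟩
        · exact ⟨childIdx jI b2 i1 + 1, by rw [h]; push_cast; ring⟩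
      have hxc : |x i1 - c i1| ≤ (2:ℝ)^(-k) := by
        rw [hci i1]; have := hx i1; linarith
      have hcp : |c i1 - p i1| ≤ 2 * (2:ℝ)^(-k) := by
        have h1 := hcP i1
        have h2 := hp i1
        rw [abs_le]; constructor <;> nlinarith [h1.1, h1.2, h2.1, h2.2, h2u]
      have hpy : |p i1 - yy i1| ≤ dist p yy := coord_dist p yy i1
      have hxt : |x i1 - (2:ℝ)^(-(kI+1)) * (mm:ℝ)| < 4 * (2:ℝ)^(-k) := by
        rw [← hmm]
        calc |x i1 - yy i1| ≤ |x i1 - c i1| + |c i1 - yy i1| := abs_sub_le _ _ _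
          _ ≤ |x i1 - c i1| + (|c i1 - p i1| + |p i1 - yy i1|) := by
              linarith [abs_sub_le (c i1) (p i1) (yy i1)]
          _ < 4 * (2:ℝ)^(-k) := by linarith
      have hxa := hb i1
      have habs := abs_lt.mp hxt
      rcases le_or_gt mm (childIdx jI b i1) with hmc | hmc
      · have htamm : (mm:ℝ) ≤ ((childIdx jI b i1 : ℤ):ℝ) := by exact_mod_cast hmc
        have hta : (2:ℝ)^(-(kI+1)) * (mm:ℝ) ≤
            (2:ℝ)^(-(kI+1)) * ((childIdx jI b i1 : ℤ):ℝ) := by nlinarith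
        apply key i1 _ (Or.inl rfl)
        rw [abs_of_nonneg (by linarith [hxa.1])]
        linarith [hxa.1]
      · have htamm : ((childIdx jI b i1 : ℤ):ℝ) + 1 ≤ (mm:ℝ) := by
          have h9 : childIdx jI b i1 + 1 ≤ mm := hmc
          exact_mod_cast h9
        have hta : (2:ℝ)^(-(kI+1)) * (((childIdx jI b i1 : ℤ):ℝ) + 1) ≤
            (2:ℝ)^(-(kI+1)) * (mm:ℝ) := by nlinarith
        apply key i1 _ (Or.inr rfl)
        rw [abs_sub_comm, abs_of_nonneg (by linarith [hxa.2])]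
        linarith [hxa.2]
    · -- Case B
      obtain ⟨w, hw3, hwI⟩ := Set.not_subset.mp hB
      obtain ⟨i1, hout⟩ := not_forall.mp hwI
      have hxc : |x i1 - c i1| ≤ (2:ℝ)^(-k) := by
        rw [hci i1]; have := hx i1; linarith
      have hw1' : |(2:ℝ)^(-(k-1)) * (((parentIdx j i1 : ℤ):ℝ) + 1/2) - w i1| ≤
          3 * (2:ℝ)^(-k) := by
        rw [abs_sub_comm]
        have h3 : 3 * (2:ℝ)^(-(k-1)) / 2 = 3 * (2:ℝ)^(-k) := by rw [h2u]; ring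
        rw [← h3]
        exact hw3 i1
      have hcc : |c i1 - (2:ℝ)^(-(k-1)) * (((parentIdx j i1 : ℤ):ℝ) + 1/2)| ≤ (2:ℝ)^(-k)/2 := by
        rw [hci i1]
        have hdm := Int.mul_ediv_add_emod (j i1) 2
        have hr := Int.emod_two_eq (j i1)
        unfold parentIdx
        have hj : (j i1 : ℝ) = 2 * ((j i1 / 2 : ℤ) : ℝ) + ((j i1 % 2 : ℤ) : ℝ) := by
          exact_mod_cast hdm.symm
        rcases hr with hr0 | hr1
        · rw [hr0] at hj; push_cast at hj
          have heq : (2:ℝ)^(-k) * ((j i1:ℝ) + 1/2) -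
              (2:ℝ)^(-(k-1)) * (((j i1 / 2 : ℤ):ℝ) + 1/2) = -((2:ℝ)^(-k)/2) := by
            rw [h2u, hj]; ring
          rw [heq, abs_neg, abs_of_nonneg (by positivity)]
        · rw [hr1] at hj; push_cast at hj
          have heq : (2:ℝ)^(-k) * ((j i1:ℝ) + 1/2) -
              (2:ℝ)^(-(k-1)) * (((j i1 / 2 : ℤ):ℝ) + 1/2) = (2:ℝ)^(-k)/2 := by
            rw [h2u, hj]; ring
          rw [heq, abs_of_nonneg (by positivity)]
      have hcw : |c i1 - w i1| ≤ (2:ℝ)^(-k)/2 + 3 * (2:ℝ)^(-k) :=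
        le_trans (abs_sub_le _ _ _) (add_le_add hcc hw1')
      have hxw : |x i1 - w i1| ≤ (2:ℝ)^(-k) * (9/2) :=
        le_trans (abs_sub_le (x i1) (c i1) (w i1)) (by linarith)
      have hcid : (2 * jI i1 : ℤ) ≤ childIdx jI b i1 ∧ childIdx jI b i1 ≤ 2 * jI i1 + 1 := by
        unfold childIdx; by_cases hbi : b i1 <;> simp [hbi]
      have hAa : (2:ℝ)^(-kI) * (jI i1:ℝ) ≤ (2:ℝ)^(-(kI+1)) * ((childIdx jI b i1:ℤ):ℝ) := by
        have hc1 : ((2 * jI i1 : ℤ):ℝ) ≤ ((childIdx jI b i1:ℤ):ℝ) := by exact_mod_cast hcid.1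
        push_cast at hc1
        rw [h2u']; nlinarith
      have haB : (2:ℝ)^(-(kI+1)) * (((childIdx jI b i1:ℤ):ℝ) + 1) ≤
          (2:ℝ)^(-kI) * ((jI i1:ℝ) + 1) := by
        have hc2 : ((childIdx jI b i1:ℤ):ℝ) ≤ ((2 * jI i1 + 1 : ℤ):ℝ) := by exact_mod_cast hcid.2
        push_cast at hc2
        rw [h2u']; nlinarith
      have hxa := hb i1
      have hxIi := hxI i1
      rcases not_and_or.mp hout with hltA | hgeB
      · push_neg at hltA
        apply key i1 _ (Or.inl rfl)
        rw [abs_of_nonneg (by linarith [hxa.1])]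
        have h5 : x i1 - w i1 ≤ (2:ℝ)^(-k) * (9/2) := le_trans (le_abs_self _) hxw
        linarith [hxIi.1]
      · push_neg at hgeB
        apply key i1 _ (Or.inr rfl)
        rw [abs_sub_comm, abs_of_nonneg (by linarith [hxa.2])]
        have h5 : w i1 - x i1 ≤ (2:ℝ)^(-k) * (9/2) := by
          rw [abs_sub_comm] at hxw; exact le_trans (le_abs_self _) hxw
        linarith [hxIi.2]
  · -- Case A
    have hPI : dyadicCube n (k-1) (parentIdx j) ⊆ dyadicCube n kI jI := by
      apply cube_nested (by omega : kI ≤ k - 1)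
      exact ⟨c, hcP, hnw.1.1.1 hcS⟩
    have hIP : dyadicCube n kI jI ⊆ dyadicCube n (k-1) (parentIdx j) := by
      by_contra hc2
      exact hA (ssubset_iff_subset_not_subset.mpr ⟨hPI, hc2⟩)
    have hk1 : k = kI + 1 := by
      have hcorner : (WithLp.toLp 2 (fun i => (2:ℝ)^(-kI) * (jI i:ℝ)) : EuclideanSpace ℝ (Fin n)) ∈
          dyadicCube n kI jI := corner_mem
      have h2k : (2:ℝ)^(-k) < (2:ℝ)^(-kI) := zpow_two_lt_iff.mpr (by omega)
      set v : ℝ := (2:ℝ)^(-kI) * (jI i0:ℝ) + (2:ℝ)^(-kI) - (2:ℝ)^(-k) with hvdef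
      have hwI2 : upd (WithLp.toLp 2 (fun i => (2:ℝ)^(-kI) * (jI i:ℝ)) : EuclideanSpace ℝ (Fin n)) i0 v ∈
          dyadicCube n kI jI := by
        intro i
        by_cases h : i = i0
        · subst h
          rw [upd_same]
          constructor
          · rw [hvdef]; linarith
          · rw [hvdef]; linarith [hu]
        · rw [upd_ne _ _ h]; exact hcorner i
      have hwP := hIP hwI2
      have hcP2 := hIP hcorner
      have h1 := (hwP i0).2
      rw [upd_same] at h1
      have h2 : (2:ℝ)^(-(k-1)) * ((parentIdx j i0 : ℤ):ℝ) ≤ (2:ℝ)^(-kI) * (jI i0:ℝ) :=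
        (hcP2 i0).1
      have h4 : (2:ℝ)^(-kI) < (2:ℝ)^(-(k-2)) := by
        have e2 : (2:ℝ)^(-(k-2)) = 4 * (2:ℝ)^(-k) := by
          rw [show -(k-2) = -(k-1) + 1 by ring, zpow_add_one₀ (by norm_num : (2:ℝ) ≠ 0), h2u]
          ring
        rw [e2, hvdef] at *
        nlinarith [h1, h2, hu]
      have h5 := zpow_two_lt_iff.mp h4
      omega
    apply key i0 _ (Or.inl rfl)
    have hxa := hb i0
    have hkeq : (2:ℝ)^(-(kI+1)) = (2:ℝ)^(-k) := by rw [hk1]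
    rw [abs_of_nonneg (by linarith [hxa.1])]
    nlinarith [hxa.2, hu, hkeq]


lemma j_bounds {k : ℤ} {j : Fin n → ℤ} {x : EuclideanSpace ℝ (Fin n)}
    (hx : x ∈ dilateCube n 2 k j) (i : Fin n) :
    j i ∈ Finset.Icc ⌈x i * (2:ℝ)^k - 3/2⌉ ⌊x i * (2:ℝ)^k + 1/2⌋ := by
  have hu : (0:ℝ) < (2:ℝ)^(-k) := by positivity
  have hk2 : (0:ℝ) < (2:ℝ)^k := by positivity
  have habs := abs_le.mp (hx i)
  have hinv : (2:ℝ)^(-k) * (2:ℝ)^k = 1 := by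
    rw [← zpow_add₀ (by norm_num : (2:ℝ) ≠ 0)]; norm_num
  rw [Finset.mem_Icc]
  constructor
  · apply Int.ceil_le.mpr
    have h2 : x i ≤ (2:ℝ)^(-k) * ((j i:ℝ) + 3/2) := by linarith [habs.2]
    have h3 : x i * (2:ℝ)^k ≤ ((2:ℝ)^(-k) * ((j i:ℝ)+3/2)) * (2:ℝ)^k :=
      mul_le_mul_of_nonneg_right h2 hk2.le
    have h4 : ((2:ℝ)^(-k) * ((j i:ℝ)+3/2)) * (2:ℝ)^k = (j i:ℝ) + 3/2 := by
      rw [mul_comm ((2:ℝ)^(-k)) _, mul_assoc, hinv, mul_one]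
    rw [h4] at h3
    linarith
  · apply Int.le_floor.mpr
    have h2 : (2:ℝ)^(-k) * ((j i:ℝ) - 1/2) ≤ x i := by linarith [habs.1]
    have h3 : ((2:ℝ)^(-k) * ((j i:ℝ)-1/2)) * (2:ℝ)^k ≤ x i * (2:ℝ)^k :=
      mul_le_mul_of_nonneg_right h2 hk2.le
    have h4 : ((2:ℝ)^(-k) * ((j i:ℝ)-1/2)) * (2:ℝ)^k = (j i:ℝ) - 1/2 := by
      rw [mul_comm ((2:ℝ)^(-k)) _, mul_assoc, hinv, mul_one]
    rw [h4] at h3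
    linarith

lemma card_Icc_le (t : ℝ) : (Finset.Icc ⌈t - 3/2⌉ ⌊t + 1/2⌋).card ≤ 3 := by
  rw [Int.card_Icc]
  have h1 : (⌊t + 1/2⌋ : ℤ) ≤ ⌈t - 3/2⌉ + 2 := by
    have h2 : t + 1/2 = (t - 3/2) + ((2:ℤ):ℝ) := by push_cast; ring
    rw [h2, Int.floor_add_intCast]
    have := Int.floor_le_ceil (t - 3/2)
    omega
  omega

lemma scale_range {kI k k0 : ℤ} {jI j j0 : Fin n → ℤ} {x : EuclideanSpace ℝ (Fin n)}
    (hxI : x ∈ dyadicCube n kI jI)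
    (h : whitney n kI jI k j) (hx : x ∈ dilateCube n 2 k j)
    (h0 : whitney n kI jI k0 j0) (hx0 : x ∈ dilateCube n 2 k0 j0) :
    k0 ≤ k + 3 := by
  obtain ⟨y, hy, hdy⟩ := upper_bound h0 hx0 hxI
  have hlow : (2:ℝ)^(-k)/2 ≤ dist x y := lower_bound h.1 hx hy
  have h16 : (2:ℝ)^(-k) < (2:ℝ)^(4-k0) := by
    have e : (2:ℝ)^(4-k0) = 16 * (2:ℝ)^(-k0) := by
      rw [show (4 - k0 : ℤ) = -k0 + 4 by ring, zpow_add₀ (by norm_num : (2:ℝ) ≠ 0),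
        show ((2:ℝ)^(4:ℤ)) = 16 by norm_num]
      ring
    rw [e]
    have hu0 : (0:ℝ) < (2:ℝ)^(-k0) := by positivity
    linarith
  have := zpow_two_lt_iff.mp h16
  omega

lemma count_bound (kI : ℤ) (jI : Fin n → ℤ) (x : EuclideanSpace ℝ (Fin n))
    (hxI : x ∈ dyadicCube n kI jI) :
    {p : ℤ × (Fin n → ℤ) | whitney n kI jI p.1 p.2 ∧
        x ∈ dilateCube n 2 p.1 p.2}.Finite ∧
    {p : ℤ × (Fin n → ℤ) | whitney n kI jI p.1 p.2 ∧
        x ∈ dilateCube n 2 p.1 p.2}.ncard ≤ 12 * 3 ^ n := by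
  classical
  set W := {p : ℤ × (Fin n → ℤ) | whitney n kI jI p.1 p.2 ∧
      x ∈ dilateCube n 2 p.1 p.2} with hW
  by_cases hWe : W = ∅
  · rw [hWe]
    exact ⟨Set.finite_empty, by simp⟩
  · obtain ⟨⟨k0, j0⟩, hp0⟩ := Set.nonempty_iff_ne_empty.mpr hWe
    set T : Finset (ℤ × (Fin n → ℤ)) := (Finset.Icc (k0-3) (k0+3)).biUnion
      (fun k => (Fintype.piFinset (fun i =>
        Finset.Icc ⌈x i * (2:ℝ)^k - 3/2⌉ ⌊x i * (2:ℝ)^k + 1/2⌋)).image (fun j => (k, j)))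
      with hT
    have hsub : W ⊆ ↑T := by
      rintro ⟨k, j⟩ ⟨hwh, hxd⟩
      have hk1 : k ≤ k0 + 3 := scale_range hxI hp0.1 hp0.2 hwh hxd
      have hk2 : k0 ≤ k + 3 := scale_range hxI hwh hxd hp0.1 hp0.2
      rw [hT, Finset.coe_biUnion]
      rw [Set.mem_iUnion]
      refine ⟨k, ?_⟩
      rw [Set.mem_iUnion]
      refine ⟨Finset.mem_coe.mpr (Finset.mem_Icc.mpr ⟨by omega, by omega⟩), ?_⟩
      rw [Finset.mem_coe]
      apply Finset.mem_image_of_mem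
      rw [Fintype.mem_piFinset]
      exact fun i => j_bounds hxd i
    have hfin : W.Finite := Set.Finite.subset T.finite_toSet hsub
    refine ⟨hfin, ?_⟩
    have hcardT : T.card ≤ 7 * 3^n := by
      calc T.card ≤ ∑ k ∈ Finset.Icc (k0-3) (k0+3), ((Fintype.piFinset (fun i =>
            Finset.Icc ⌈x i * (2:ℝ)^k - 3/2⌉ ⌊x i * (2:ℝ)^k + 1/2⌋)).image
              (fun j => ((k, j) : ℤ × (Fin n → ℤ)))).card := Finset.card_biUnion_le
        _ ≤ ∑ _k ∈ Finset.Icc (k0-3) (k0+3), 3^n := by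
            apply Finset.sum_le_sum
            intro k _
            apply le_trans Finset.card_image_le
            rw [Fintype.card_piFinset]
            calc ∏ i : Fin n, (Finset.Icc ⌈x i * (2:ℝ)^k - 3/2⌉ ⌊x i * (2:ℝ)^k + 1/2⌋).card
                ≤ ∏ _i : Fin n, 3 := Finset.prod_le_prod' (fun i _ => card_Icc_le _)
              _ = 3^n := by rw [Finset.prod_const, Finset.card_univ, Fintype.card_fin]
        _ = 7 * 3^n := by
            rw [Finset.sum_const, Int.card_Icc, show (k0+3+1-(k0-3) : ℤ) = 7 by ring]
            simp [mul_comm]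
    calc W.ncard ≤ (↑T : Set (ℤ × (Fin n → ℤ))).ncard :=
          Set.ncard_le_ncard hsub T.finite_toSet
      _ = T.card := Set.ncard_coe_finset T
      _ ≤ 7 * 3^n := hcardT
      _ ≤ 12 * 3^n := Nat.mul_le_mul_right _ (by norm_num)


lemma dilate_measurable (lam : ℝ) (k : ℤ) (j : Fin n → ℤ) :
    MeasurableSet (dilateCube n lam k j) := by
  have h : dilateCube n lam k j = ⋂ i, (fun x : EuclideanSpace ℝ (Fin n) => x i) ⁻¹'
      (Set.Icc ((2:ℝ)^(-k) * ((j i:ℝ)+1/2) - lam * (2:ℝ)^(-k)/2)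
               ((2:ℝ)^(-k) * ((j i:ℝ)+1/2) + lam * (2:ℝ)^(-k)/2)) := by
    ext z
    simp only [dilateCube, Set.mem_setOf_eq, Set.mem_iInter, Set.mem_preimage, Set.mem_Icc]
    constructor
    · intro h i
      have h2 := abs_le.mp (h i)
      constructor <;> linarith [h2.1, h2.2]
    · intro h i
      rw [abs_le]
      constructor <;> linarith [(h i).1, (h i).2]
  rw [h]
  exact MeasurableSet.iInter fun i => measurableSet_Icc.preimage (continuous_coord i).measurable

lemma cube_measurable (k : ℤ) (j : Fin n → ℤ) : MeasurableSet (dyadicCube n k j) := by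
  have h : dyadicCube n k j = ⋂ i, (fun x : EuclideanSpace ℝ (Fin n) => x i) ⁻¹'
      (Set.Ico ((2:ℝ)^(-k) * (j i:ℝ)) ((2:ℝ)^(-k) * ((j i:ℝ)+1))) := by
    ext z
    simp only [dyadicCube, Set.mem_setOf_eq, Set.mem_iInter, Set.mem_preimage, Set.mem_Ico]
  rw [h]
  exact MeasurableSet.iInter fun i => measurableSet_Ico.preimage (continuous_coord i).measurable

lemma two_subset {kI k : ℤ} {jI j : Fin n → ℤ} (hw : whitneyProp n kI jI k j) :
    dilateCube n 2 k j ⊆ dyadicCube n kI jI := by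
  intro z hz
  apply hw.2.1
  intro i
  have hu : (0:ℝ) < (2:ℝ)^(-k) := by positivity
  exact le_trans (hz i) (by linarith)

end WhitAux

/-- The doubled Whitney cubes `{2S : S ∈ 𝒲(I)}` have bounded overlap:
every `x ∈ I` lies in at most `12·3ⁿ` of them; consequently
`Σ_{S ∈ 𝒲(I)} μ(2S) ≤ 12·3ⁿ μ(I)` for every positive measure `μ`. -/
theorem whitney_bounded_overlap (n : ℕ) (kI : ℤ) (jI : Fin n → ℤ) :
    (∀ x ∈ dyadicCube n kI jI,
      {p : ℤ × (Fin n → ℤ) | whitney n kI jI p.1 p.2 ∧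
          x ∈ dilateCube n 2 p.1 p.2}.Finite ∧
      {p : ℤ × (Fin n → ℤ) | whitney n kI jI p.1 p.2 ∧
          x ∈ dilateCube n 2 p.1 p.2}.ncard ≤ 12 * 3 ^ n) ∧
    (∀ μ : Measure (EuclideanSpace ℝ (Fin n)),
      ∑' p : {p : ℤ × (Fin n → ℤ) // whitney n kI jI p.1 p.2},
          μ (dilateCube n 2 p.1.1 p.1.2) ≤
        (12 * 3 ^ n : ℝ≥0∞) * μ (dyadicCube n kI jI)) := by

  classical
  constructor
  · exact fun x hx => WhitAux.count_bound kI jI x hx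
  · intro μ
    have hmeas : ∀ p : {p : ℤ × (Fin n → ℤ) // whitney n kI jI p.1 p.2},
        MeasurableSet (dilateCube n 2 p.1.1 p.1.2) :=
      fun p => WhitAux.dilate_measurable _ _ _
    have htop : (12 * 3^n : ℝ≥0∞) ≠ ⊤ := by
      exact ENNReal.mul_ne_top (by norm_num) (ENNReal.pow_ne_top (by norm_num))
    calc ∑' p : {p : ℤ × (Fin n → ℤ) // whitney n kI jI p.1 p.2},
          μ (dilateCube n 2 p.1.1 p.1.2)
        = ∑' p : {p : ℤ × (Fin n → ℤ) // whitney n kI jI p.1 p.2},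
            ∫⁻ z, (dilateCube n 2 p.1.1 p.1.2).indicator 1 z ∂μ :=
          tsum_congr fun p => (lintegral_indicator_one (hmeas p)).symm
      _ = ∫⁻ z, ∑' p : {p : ℤ × (Fin n → ℤ) // whitney n kI jI p.1 p.2},
            (dilateCube n 2 p.1.1 p.1.2).indicator 1 z ∂μ :=
          (lintegral_tsum (fun p => (measurable_one.indicator (hmeas p)).aemeasurable)).symm
      _ ≤ ∫⁻ z, (12 * 3^n : ℝ≥0∞) * (dyadicCube n kI jI).indicator 1 z ∂μ := by
          refine lintegral_mono fun z => ?_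
          show ∑' p : {p : ℤ × (Fin n → ℤ) // whitney n kI jI p.1 p.2},
              (dilateCube n 2 p.1.1 p.1.2).indicator (1 : EuclideanSpace ℝ (Fin n) → ℝ≥0∞) z
            ≤ (12 * 3^n : ℝ≥0∞) * (dyadicCube n kI jI).indicator 1 z
          by_cases hzI : z ∈ dyadicCube n kI jI
          · obtain ⟨hfin, hcard⟩ := WhitAux.count_bound kI jI z hzI
            set F := {p : {p : ℤ × (Fin n → ℤ) // whitney n kI jI p.1 p.2} |
              z ∈ dilateCube n 2 p.1.1 p.1.2} with hF
            have himg : Subtype.val '' F ⊆ {p : ℤ × (Fin n → ℤ) | whitney n kI jI p.1 p.2 ∧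
                z ∈ dilateCube n 2 p.1 p.2} := by
              rintro q ⟨p, hp, rfl⟩
              exact ⟨p.2, hp⟩
            have hFfin : F.Finite := by
              have h2 := Set.Finite.subset hfin himg
              exact Set.Finite.of_finite_image h2 Subtype.val_injective.injOn
            have h0 : ∀ p ∉ hFfin.toFinset,
                (dilateCube n 2 p.1.1 p.1.2).indicator
                  (1 : EuclideanSpace ℝ (Fin n) → ℝ≥0∞) z = 0 := by
              intro p hp
              apply Set.indicator_of_notMem
              intro hzA
              exact hp (hFfin.mem_toFinset.mpr hzA)
            have hsum : ∑' p : {p : ℤ × (Fin n → ℤ) // whitney n kI jI p.1 p.2},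
                (dilateCube n 2 p.1.1 p.1.2).indicator (1 : EuclideanSpace ℝ (Fin n) → ℝ≥0∞) z
                = (hFfin.toFinset.card : ℝ≥0∞) := by
              have h1mem : ∀ p ∈ hFfin.toFinset,
                  (dilateCube n 2 p.1.1 p.1.2).indicator
                    (1 : EuclideanSpace ℝ (Fin n) → ℝ≥0∞) z = 1 := by
                intro p hp
                have hmem : p ∈ F := hFfin.mem_toFinset.mp hp
                rw [hF, Set.mem_setOf_eq] at hmem
                rw [Set.indicator_of_mem hmem, Pi.one_apply]
              rw [tsum_eq_sum h0, Finset.sum_congr rfl h1mem, Finset.sum_const,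
                nsmul_eq_mul, mul_one]
            have hcard2 : hFfin.toFinset.card ≤ 12 * 3^n := by
              have h5 : F.ncard = hFfin.toFinset.card := Set.ncard_eq_toFinset_card F hFfin
              have h6 : (Subtype.val '' F).ncard = F.ncard :=
                Set.ncard_image_of_injective F Subtype.val_injective
              have h7 : (Subtype.val '' F).ncard ≤
                  {p : ℤ × (Fin n → ℤ) | whitney n kI jI p.1 p.2 ∧
                    z ∈ dilateCube n 2 p.1 p.2}.ncard := Set.ncard_le_ncard himg hfin
              omega
            rw [hsum, Set.indicator_of_mem hzI, Pi.one_apply, mul_one]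
            calc (hFfin.toFinset.card : ℝ≥0∞) ≤ ((12 * 3^n : ℕ) : ℝ≥0∞) :=
                  Nat.cast_le.mpr hcard2
              _ = 12 * 3^n := by push_cast; ring
          · have hall : ∀ p : {p : ℤ × (Fin n → ℤ) // whitney n kI jI p.1 p.2},
                (dilateCube n 2 p.1.1 p.1.2).indicator
                  (1 : EuclideanSpace ℝ (Fin n) → ℝ≥0∞) z = 0 :=
              fun p => Set.indicator_of_notMem
                (fun hzA => hzI (WhitAux.two_subset p.2.1 hzA)) _
            rw [tsum_congr hall, tsum_zero]
            exact zero_le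
      _ = (12 * 3^n : ℝ≥0∞) * μ (dyadicCube n kI jI) := by
          rw [lintegral_const_mul' _ _ htop,
            lintegral_indicator_one (WhitAux.cube_measurable kI jI)]

end
end

section
/- Let μ be a positive Radon measure on ℝⁿ, Q a dyadic cube, and f integrable, supported in Q with ∫f dμ = 0. For a dyadic cube J_p ⊂ Q with μ(J_p) ≠ 0 and center c, and a dyadic cube R with ℓ(J_p) < ℓ(R), define the localized difference Ĥ_R f = (Σ_{I∈ch(R)} ⟨f⟩_I χ_I(c))χ_Q − ⟨f⟩_R χ_R(c)χ_Q and the modified wavelet ψ^{full}_{I,J_p} = μ(I)^{1/2}(χ_I(c)/μ(I) − χ_{I_p}(c)/μ(I_p))χ_Q for μ(I)≠0 (and 0 otherwise). Then Ĥ_R f = Σ_{I∈ch(R)} ⟨f, ψ_I⟩ ψ^{full}_{I,J_p}, where ψ_I is the standard Haar wavelet. -/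
open MeasureTheory
open scoped Classical ENNReal

noncomputable section

/-- The Haar wavelet `ψ_I = μ(I)^{1/2} (μ(I)⁻¹ χ_I - μ(I_p)⁻¹ χ_{I_p})` associated with the
dyadic cube `I = (k, j)`, set to `0` when `μ(I) = 0`. -/
def haar (n : ℕ) (μ : Measure (EuclideanSpace ℝ (Fin n))) (k : ℤ) (j : Fin n → ℤ) :
    EuclideanSpace ℝ (Fin n) → ℝ := fun x =>
  if μ (dyadicCube n k j) = 0 then 0 else
    Real.sqrt (μ (dyadicCube n k j)).toReal *
      ((dyadicCube n k j).indicator (fun _ => (1:ℝ)) x / (μ (dyadicCube n k j)).toReal -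
       (dyadicCube n (k-1) (parentIdx j)).indicator (fun _ => (1:ℝ)) x /
         (μ (dyadicCube n (k-1) (parentIdx j))).toReal)


/-- The center of the dyadic cube `(k, j)`. -/
def dyadicCtr (n : ℕ) (k : ℤ) (j : Fin n → ℤ) : EuclideanSpace ℝ (Fin n) :=
  WithLp.toLp 2 (fun i => (2:ℝ) ^ (-k) * ((j i : ℝ) + 1/2))

/-- The modified wavelet `ψ^{full}_{I,J_p}` associated with a child `I` of the dyadic cube
`R = (kR, jR)`, the point `c = c(J_p)` and the cube `Q`:
`ψ^{full}_{I,J_p} = μ(I)^{1/2} (χ_I(c)/μ(I) - χ_{I_p}(c)/μ(I_p)) χ_Q`, and `0` if `μ(I)=0`. -/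
def haarFull (n : ℕ) (μ : Measure (EuclideanSpace ℝ (Fin n))) (kR : ℤ) (jR : Fin n → ℤ)
    (b : Fin n → Bool) (c : EuclideanSpace ℝ (Fin n)) (Q : Set (EuclideanSpace ℝ (Fin n))) :
    EuclideanSpace ℝ (Fin n) → ℝ := fun x =>
  if μ (dyadicCube n (kR+1) (childIdx jR b)) = 0 then 0 else
    Real.sqrt (μ (dyadicCube n (kR+1) (childIdx jR b))).toReal *
      ((dyadicCube n (kR+1) (childIdx jR b)).indicator (fun _ => (1:ℝ)) c /
          (μ (dyadicCube n (kR+1) (childIdx jR b))).toReal -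
        (dyadicCube n kR jR).indicator (fun _ => (1:ℝ)) c / (μ (dyadicCube n kR jR)).toReal) *
      Q.indicator (fun _ => (1:ℝ)) x

/-- The localized difference
`Ĥ_R f = (Σ_{I ∈ ch(R)} ⟨f⟩_I χ_I(c)) χ_Q - ⟨f⟩_R χ_R(c) χ_Q`. -/
def localDiff (n : ℕ) (μ : Measure (EuclideanSpace ℝ (Fin n))) (kR : ℤ) (jR : Fin n → ℤ)
    (c : EuclideanSpace ℝ (Fin n)) (Q : Set (EuclideanSpace ℝ (Fin n)))
    (f : EuclideanSpace ℝ (Fin n) → ℝ) : EuclideanSpace ℝ (Fin n) → ℝ := fun x =>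
  (∑ b : Fin n → Bool,
      avg n μ (dyadicCube n (kR+1) (childIdx jR b)) f *
        (dyadicCube n (kR+1) (childIdx jR b)).indicator (fun _ => (1:ℝ)) c) *
      Q.indicator (fun _ => (1:ℝ)) x -
    avg n μ (dyadicCube n kR jR) f *
      (dyadicCube n kR jR).indicator (fun _ => (1:ℝ)) c * Q.indicator (fun _ => (1:ℝ)) x

namespace Stmt19

lemma floor_div_int' (a : ℝ) (d : ℕ) (hd : 0 < d) : ⌊a / (d:ℝ)⌋ = ⌊a⌋ / (d:ℤ) := by
  have hd' : (0:ℝ) < (d:ℝ) := by exact_mod_cast hd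
  have hdz : (0:ℤ) < (d:ℤ) := by exact_mod_cast hd
  rw [Int.floor_eq_iff]
  constructor
  · rw [le_div_iff₀ hd']
    calc ((⌊a⌋ / (d:ℤ) : ℤ) : ℝ) * (d:ℝ) = ((⌊a⌋ / (d:ℤ) * (d:ℤ) : ℤ) : ℝ) := by push_cast; ring
    _ ≤ (⌊a⌋ : ℝ) := by exact_mod_cast Int.ediv_mul_le ⌊a⌋ hdz.ne'
    _ ≤ a := Int.floor_le a
  · rw [div_lt_iff₀ hd']
    calc a < (⌊a⌋ : ℝ) + 1 := Int.lt_floor_add_one a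
    _ ≤ ((⌊a⌋ / (d:ℤ) + 1) * (d:ℤ) : ℤ) := by
        exact_mod_cast Int.add_one_le_iff.mpr (Int.lt_ediv_add_one_mul_self ⌊a⌋ hdz)
    _ = ((⌊a⌋ / (d:ℤ) : ℤ) : ℝ) * (d:ℝ) + 1 * (d:ℝ) := by push_cast; ring
    _ ≤ (((⌊a⌋ / (d:ℤ) : ℤ) : ℝ) + 1) * (d:ℝ) := by ring_nf; rfl

lemma floor_zpow (k k' : ℤ) (h : k' ≤ k) (t : ℝ) :
    ⌊(2:ℝ)^k' * t⌋ = ⌊(2:ℝ)^k * t⌋ / ((2:ℤ)^(k - k').toNat) := by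
  have h2 : (((2:ℕ)^((k-k').toNat) : ℕ) : ℝ) = (2:ℝ)^(k-k') := by
    push_cast
    rw [← zpow_natCast]
    congr 1
    omega
  have hrw : (2:ℝ)^k' * t = ((2:ℝ)^k * t) / (((2:ℕ)^((k-k').toNat) : ℕ) : ℝ) := by
    rw [h2, eq_div_iff (zpow_pos (show (0:ℝ) < 2 by norm_num) _).ne',
       mul_right_comm, ← zpow_add₀ (two_ne_zero : (2:ℝ) ≠ 0),
       show k' + (k - k') = k by ring]
  rw [hrw, floor_div_int' _ _ (pow_pos two_pos _)]
  push_cast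
  ring_nf

lemma mem_dyadicCube_iff {n : ℕ} {k : ℤ} {j : Fin n → ℤ} {x : EuclideanSpace ℝ (Fin n)} :
    x ∈ dyadicCube n k j ↔ ∀ i, ⌊(2:ℝ)^k * x i⌋ = j i := by
  unfold dyadicCube
  simp only [Set.mem_setOf_eq]
  refine forall_congr' fun i => ?_
  have h2 : (0:ℝ) < (2:ℝ)^k := zpow_pos (by norm_num) k
  have e1 : (2:ℝ)^(-k) * ((j i : ℤ) : ℝ) = ((j i : ℤ) : ℝ) / (2:ℝ)^k := by
    rw [zpow_neg, inv_mul_eq_div]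
  have e2 : (2:ℝ)^(-k) * (((j i : ℤ) : ℝ) + 1) = (((j i : ℤ) : ℝ) + 1) / (2:ℝ)^k := by
    rw [zpow_neg, inv_mul_eq_div]
  rw [Int.floor_eq_iff, e1, e2, div_le_iff₀ h2, lt_div_iff₀ h2, mul_comm (x i) ((2:ℝ)^k)]


lemma measurableSet_dyadicCube {n : ℕ} {k : ℤ} {j : Fin n → ℤ} :
    MeasurableSet (dyadicCube n k j) := by
  have : dyadicCube n k j = ⋂ i, (fun x : EuclideanSpace ℝ (Fin n) => x i) ⁻¹'
      Set.Ico ((2:ℝ)^(-k) * (j i : ℝ)) ((2:ℝ)^(-k) * ((j i : ℝ) + 1)) := by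
    ext x
    simp [dyadicCube, Set.mem_iInter, Set.mem_Ico]
  rw [this]
  exact MeasurableSet.iInter fun i => ((measurable_pi_apply i).comp (WithLp.measurable_ofLp 2 _)) measurableSet_Ico

lemma measure_dyadicCube_ne_top {n : ℕ} (μ : Measure (EuclideanSpace ℝ (Fin n)))
    [IsFiniteMeasureOnCompacts μ] {k : ℤ} {j : Fin n → ℤ} :
    μ (dyadicCube n k j) ≠ ∞ := by
  set e := EuclideanSpace.equiv (Fin n) ℝ
  have hcomp : IsCompact (e.symm '' Set.univ.pi fun i =>
      Set.Icc ((2:ℝ)^(-k) * (j i : ℝ)) ((2:ℝ)^(-k) * ((j i : ℝ) + 1))) :=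
    (isCompact_univ_pi fun i => isCompact_Icc).image e.symm.continuous
  have hsub : dyadicCube n k j ⊆ e.symm '' Set.univ.pi fun i =>
      Set.Icc ((2:ℝ)^(-k) * (j i : ℝ)) ((2:ℝ)^(-k) * ((j i : ℝ) + 1)) := by
    intro x hx
    refine ⟨e x, fun i _ => ⟨(hx i).1, (hx i).2.le⟩, e.symm_apply_apply x⟩
  exact ((measure_mono hsub).trans_lt hcomp.measure_lt_top).ne

lemma parentIdx_childIdx {n : ℕ} (j : Fin n → ℤ) (b : Fin n → Bool) :
    parentIdx (childIdx j b) = j := by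
  funext i
  unfold parentIdx childIdx
  cases b i <;> simp <;> omega

lemma child_subset {n : ℕ} {kR : ℤ} {jR : Fin n → ℤ} (b : Fin n → Bool) :
    dyadicCube n (kR+1) (childIdx jR b) ⊆ dyadicCube n kR jR := by
  intro x hx
  rw [mem_dyadicCube_iff] at hx ⊢
  intro i
  have h1 := floor_zpow (kR+1) kR (by omega) (x i)
  rw [hx i] at h1
  rw [h1, show (kR+1-kR).toNat = 1 by omega]
  unfold childIdx
  cases b i <;> simp <;> omega

lemma exists_child {n : ℕ} {kR : ℤ} {jR : Fin n → ℤ} {x : EuclideanSpace ℝ (Fin n)}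
    (hx : x ∈ dyadicCube n kR jR) :
    ∃ b : Fin n → Bool, x ∈ dyadicCube n (kR+1) (childIdx jR b) := by
  rw [mem_dyadicCube_iff] at hx
  refine ⟨fun i => decide (⌊(2:ℝ)^(kR+1) * x i⌋ = 2 * jR i + 1), ?_⟩
  rw [mem_dyadicCube_iff]
  intro i
  have h1 := floor_zpow (kR+1) kR (by omega) (x i)
  rw [hx i, show (kR+1-kR).toNat = 1 by omega] at h1
  unfold childIdx
  by_cases hc : ⌊(2:ℝ)^(kR+1) * x i⌋ = 2 * jR i + 1 <;> simp [hc] <;> omega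

lemma child_eq_of_mem {n : ℕ} {kR : ℤ} {jR : Fin n → ℤ} {x : EuclideanSpace ℝ (Fin n)}
    {b b' : Fin n → Bool} (h : x ∈ dyadicCube n (kR+1) (childIdx jR b))
    (h' : x ∈ dyadicCube n (kR+1) (childIdx jR b')) : b = b' := by
  rw [mem_dyadicCube_iff] at h h'
  funext i
  have h1 := h i
  have h2 := h' i
  rw [h1] at h2
  unfold childIdx at h2
  cases hb : b i <;> cases hb' : b' i <;> rw [hb, hb'] at h2 <;> simp at h2 <;> omega

lemma ctr_mem {n : ℕ} (k : ℤ) (j : Fin n → ℤ) : dyadicCtr n k j ∈ dyadicCube n k j := by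
  rw [mem_dyadicCube_iff]
  intro i
  have hx : dyadicCtr n k j i = (2:ℝ)^(-k) * ((j i : ℝ) + 1/2) := rfl
  rw [hx, ← mul_assoc, ← zpow_add₀ (two_ne_zero : (2:ℝ) ≠ 0), add_neg_cancel, zpow_zero, one_mul]
  rw [Int.floor_eq_iff]
  constructor <;> norm_num

lemma nested {n : ℕ} {k k' : ℤ} {j j' : Fin n → ℤ} (h : k' ≤ k)
    {x : EuclideanSpace ℝ (Fin n)} (hx : x ∈ dyadicCube n k j)
    (hx' : x ∈ dyadicCube n k' j') : dyadicCube n k j ⊆ dyadicCube n k' j' := by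
  intro y hy
  rw [mem_dyadicCube_iff] at hx hx' hy ⊢
  intro i
  have h1 := floor_zpow k k' h (x i)
  have h2 := floor_zpow k k' h (y i)
  rw [hx i] at h1
  rw [hy i] at h2
  rw [h2, ← h1, hx' i]


lemma integrable_mul_indicator {n : ℕ} {μ : Measure (EuclideanSpace ℝ (Fin n))}
    {f : EuclideanSpace ℝ (Fin n) → ℝ} (hf : Integrable f μ)
    {s : Set (EuclideanSpace ℝ (Fin n))} (hs : MeasurableSet s) :
    Integrable (fun x => f x * s.indicator (fun _ => (1:ℝ)) x) μ := by
  have h : (fun x => f x * s.indicator (fun _ => (1:ℝ)) x) = s.indicator f := by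
    funext x; by_cases hx : x ∈ s <;> simp [hx]
  rw [h]
  exact hf.indicator hs

lemma integral_mul_indicator {n : ℕ} {μ : Measure (EuclideanSpace ℝ (Fin n))}
    {f : EuclideanSpace ℝ (Fin n) → ℝ} (hf : Integrable f μ)
    {s : Set (EuclideanSpace ℝ (Fin n))} (hs : MeasurableSet s) :
    ∫ x, f x * s.indicator (fun _ => (1:ℝ)) x ∂μ = ∫ x in s, f x ∂μ := by
  have h : (fun x => f x * s.indicator (fun _ => (1:ℝ)) x) = s.indicator f := by
    funext x; by_cases hx : x ∈ s <;> simp [hx]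
  rw [h, integral_indicator hs]

lemma integral_f_haar {n : ℕ} (μ : Measure (EuclideanSpace ℝ (Fin n)))
    [IsFiniteMeasureOnCompacts μ]
    {f : EuclideanSpace ℝ (Fin n) → ℝ} (hf : Integrable f μ)
    (kR : ℤ) (jR : Fin n → ℤ) (b : Fin n → Bool) :
    ∫ y, f y * haar n μ (kR+1) (childIdx jR b) y ∂μ =
      if μ (dyadicCube n (kR+1) (childIdx jR b)) = 0 then 0 else
        Real.sqrt (μ (dyadicCube n (kR+1) (childIdx jR b))).toReal *
          ((∫ y in dyadicCube n (kR+1) (childIdx jR b), f y ∂μ) /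
              (μ (dyadicCube n (kR+1) (childIdx jR b))).toReal -
            (∫ y in dyadicCube n kR jR, f y ∂μ) / (μ (dyadicCube n kR jR)).toReal) := by
  have hhaar : haar n μ (kR+1) (childIdx jR b) = fun y =>
      if μ (dyadicCube n (kR+1) (childIdx jR b)) = 0 then 0 else
        Real.sqrt (μ (dyadicCube n (kR+1) (childIdx jR b))).toReal *
          ((dyadicCube n (kR+1) (childIdx jR b)).indicator (fun _ => (1:ℝ)) y /
              (μ (dyadicCube n (kR+1) (childIdx jR b))).toReal -
            (dyadicCube n kR jR).indicator (fun _ => (1:ℝ)) y /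
              (μ (dyadicCube n kR jR)).toReal) := by
    funext y
    unfold haar
    rw [parentIdx_childIdx, show kR+1-1 = kR by ring]
  rw [hhaar]
  by_cases h : μ (dyadicCube n (kR+1) (childIdx jR b)) = 0
  · simp [h]
  · rw [if_neg h]
    simp only [if_neg h]
    have key : (fun y => f y *
        (Real.sqrt (μ (dyadicCube n (kR+1) (childIdx jR b))).toReal *
          ((dyadicCube n (kR+1) (childIdx jR b)).indicator (fun _ => (1:ℝ)) y /
              (μ (dyadicCube n (kR+1) (childIdx jR b))).toReal -
            (dyadicCube n kR jR).indicator (fun _ => (1:ℝ)) y /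
              (μ (dyadicCube n kR jR)).toReal)))
        = fun y => Real.sqrt (μ (dyadicCube n (kR+1) (childIdx jR b))).toReal *
            ((f y * (dyadicCube n (kR+1) (childIdx jR b)).indicator (fun _ => (1:ℝ)) y) /
                (μ (dyadicCube n (kR+1) (childIdx jR b))).toReal -
              (f y * (dyadicCube n kR jR).indicator (fun _ => (1:ℝ)) y) /
                (μ (dyadicCube n kR jR)).toReal) := by
      funext y; ring
    rw [key, integral_const_mul, integral_sub
        ((integrable_mul_indicator hf measurableSet_dyadicCube).div_const _)
        ((integrable_mul_indicator hf measurableSet_dyadicCube).div_const _),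
      integral_div, integral_div, integral_mul_indicator hf measurableSet_dyadicCube,
      integral_mul_indicator hf measurableSet_dyadicCube]

end Stmt19

/-- For `f` integrable, supported in `Q`, with mean zero, a dyadic cube
`J_p ⊂ Q` with `μ(J_p) ≠ 0` and center `c`, and a dyadic cube `R` with `ℓ(J_p) < ℓ(R)`,
the localized difference expands as
`Ĥ_R f = Σ_{I ∈ ch(R)} ⟨f, ψ_I⟩ ψ^{full}_{I,J_p}`. -/
theorem localDiff_eq_sum_haarFull (n : ℕ) (μ : Measure (EuclideanSpace ℝ (Fin n)))
    [IsFiniteMeasureOnCompacts μ]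
    (kQ : ℤ) (jQ : Fin n → ℤ)
    (f : EuclideanSpace ℝ (Fin n) → ℝ) (hf : Integrable f μ)
    (hsupp : Function.support f ⊆ dyadicCube n kQ jQ) (hmean : (∫ x, f x ∂μ) = 0)
    (kJ : ℤ) (jJ : Fin n → ℤ) (hJQ : dyadicCube n kJ jJ ⊆ dyadicCube n kQ jQ)
    (hJ : μ (dyadicCube n kJ jJ) ≠ 0)
    (kR : ℤ) (jR : Fin n → ℤ) (hlen : kR < kJ) :
    ∀ x, localDiff n μ kR jR (dyadicCtr n kJ jJ) (dyadicCube n kQ jQ) f x =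
      ∑ b : Fin n → Bool,
        (∫ y, f y * haar n μ (kR+1) (childIdx jR b) y ∂μ) *
          haarFull n μ kR jR b (dyadicCtr n kJ jJ) (dyadicCube n kQ jQ) x := by
  intro x
  classical
  set c := dyadicCtr n kJ jJ with hc_def
  simp only [localDiff, haarFull, avg, Stmt19.integral_f_haar μ hf kR jR]
  by_cases hc : c ∈ dyadicCube n kR jR
  · -- c lies in R
    obtain ⟨b₀, hb₀⟩ := Stmt19.exists_child hc
    have hJsub : dyadicCube n kJ jJ ⊆ dyadicCube n (kR+1) (childIdx jR b₀) :=
      Stmt19.nested (by omega) (Stmt19.ctr_mem kJ jJ) hb₀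
    have hI0 : μ (dyadicCube n (kR+1) (childIdx jR b₀)) ≠ 0 :=
      fun h => hJ (measure_mono_null hJsub h)
    have hR0 : μ (dyadicCube n kR jR) ≠ 0 :=
      fun h => hI0 (measure_mono_null (Stmt19.child_subset b₀) h)
    have hRt : μ (dyadicCube n kR jR) ≠ ∞ := Stmt19.measure_dyadicCube_ne_top μ
    have hIt : ∀ b : Fin n → Bool, μ (dyadicCube n (kR+1) (childIdx jR b)) ≠ ∞ :=
      fun b => Stmt19.measure_dyadicCube_ne_top μ
    have hind : ∀ b : Fin n → Bool,
        (dyadicCube n (kR+1) (childIdx jR b)).indicator (fun _ => (1:ℝ)) c =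
        if b = b₀ then 1 else 0 := by
      intro b
      by_cases hbb : b = b₀
      · subst hbb; rw [if_pos rfl, Set.indicator_of_mem hb₀]
      · rw [if_neg hbb, Set.indicator_of_notMem]
        intro hmem; exact hbb (Stmt19.child_eq_of_mem hmem hb₀)
    have hindR : (dyadicCube n kR jR).indicator (fun _ => (1:ℝ)) c = 1 :=
      Set.indicator_of_mem hc _
    set q := (dyadicCube n kQ jQ).indicator (fun _ => (1:ℝ)) x with hq_def
    set S : (Fin n → Bool) → ℝ :=
      fun b => ∫ y in dyadicCube n (kR+1) (childIdx jR b), f y ∂μ with hS_def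
    set a : (Fin n → Bool) → ℝ :=
      fun b => (μ (dyadicCube n (kR+1) (childIdx jR b))).toReal with ha_def
    set SR : ℝ := ∫ y in dyadicCube n kR jR, f y ∂μ with hSR_def
    set aR : ℝ := (μ (dyadicCube n kR jR)).toReal with haR_def
    have haRne : aR ≠ 0 := ENNReal.toReal_ne_zero.mpr ⟨hR0, hRt⟩
    have ha0ne : a b₀ ≠ 0 := ENNReal.toReal_ne_zero.mpr ⟨hI0, hIt b₀⟩
    have hunion : dyadicCube n kR jR =
        ⋃ b ∈ (Finset.univ : Finset (Fin n → Bool)), dyadicCube n (kR+1) (childIdx jR b) := by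
      ext y
      simp only [Set.mem_iUnion, Finset.mem_univ, exists_prop, true_and]
      exact ⟨fun hy => Stmt19.exists_child hy, fun ⟨b, hb⟩ => Stmt19.child_subset b hb⟩
    have hdisj : Set.Pairwise ↑(Finset.univ : Finset (Fin n → Bool))
        (Function.onFun Disjoint fun b => dyadicCube n (kR+1) (childIdx jR b)) := by
      intro b _ b' _ hne
      exact Set.disjoint_left.mpr fun y hy hy' => hne (Stmt19.child_eq_of_mem hy hy')
    have hsum_int : SR = ∑ b : Fin n → Bool, S b := by
      rw [hSR_def, hS_def, hunion, integral_biUnion_finset _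
        (fun b _ => Stmt19.measurableSet_dyadicCube) hdisj (fun b _ => hf.integrableOn)]
    have hsum_meas : aR = ∑ b : Fin n → Bool, a b := by
      rw [haR_def, ha_def, hunion, measure_biUnion_finset hdisj
        (fun b _ => Stmt19.measurableSet_dyadicCube),
        ENNReal.toReal_sum (fun b _ => hIt b)]
    have hterm : ∀ b : Fin n → Bool,
        (if μ (dyadicCube n (kR+1) (childIdx jR b)) = 0 then 0 else
          Real.sqrt (a b) * (S b / a b - SR / aR)) *
        (if μ (dyadicCube n (kR+1) (childIdx jR b)) = 0 then 0 else
          Real.sqrt (a b) *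
            ((dyadicCube n (kR+1) (childIdx jR b)).indicator (fun _ => (1:ℝ)) c / a b -
              (dyadicCube n kR jR).indicator (fun _ => (1:ℝ)) c / aR) * q)
        = (if b = b₀ then (S b₀ / a b₀ - SR / aR) * q else 0) -
            (S b - a b * (SR / aR)) / aR * q := by
      intro b
      rw [hind b, hindR]
      by_cases hb : μ (dyadicCube n (kR+1) (childIdx jR b)) = 0
      · have hbne : b ≠ b₀ := fun e => hI0 (e ▸ hb)
        have hSb : S b = 0 := by
          rw [hS_def]; exact setIntegral_measure_zero _ hb
        have hab : a b = 0 := by rw [ha_def]; simp [hb]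
        simp [hb, hbne, hSb, hab]
      · have habne : a b ≠ 0 := ENNReal.toReal_ne_zero.mpr ⟨hb, hIt b⟩
        have hsq : Real.sqrt (a b) * Real.sqrt (a b) = a b :=
          Real.mul_self_sqrt ENNReal.toReal_nonneg
        rw [if_neg hb, if_neg hb]
        by_cases hbb : b = b₀
        · rw [if_pos hbb, if_pos hbb, hbb]
          rw [show Real.sqrt (a b₀) * (S b₀ / a b₀ - SR / aR) *
              (Real.sqrt (a b₀) * ((1:ℝ) / a b₀ - 1 / aR) * q) =
              (Real.sqrt (a b₀) * Real.sqrt (a b₀)) *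
                ((S b₀ / a b₀ - SR / aR) * (((1:ℝ) / a b₀ - 1 / aR) * q)) from by ring,
            Real.mul_self_sqrt ENNReal.toReal_nonneg]
          field_simp
          ring
        · rw [if_neg hbb, if_neg hbb]
          rw [show Real.sqrt (a b) * (S b / a b - SR / aR) *
              (Real.sqrt (a b) * ((0:ℝ) / a b - 1 / aR) * q) =
              (Real.sqrt (a b) * Real.sqrt (a b)) *
                ((S b / a b - SR / aR) * (((0:ℝ) / a b - 1 / aR) * q)) from by ring, hsq]
          field_simp
          ring
    have havg : ∀ b : Fin n → Bool,
        (if μ (dyadicCube n (kR+1) (childIdx jR b)) = 0 then 0 else S b / a b) *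
          (dyadicCube n (kR+1) (childIdx jR b)).indicator (fun _ => (1:ℝ)) c =
        if b = b₀ then S b₀ / a b₀ else 0 := by
      intro b
      rw [hind b]
      by_cases hbb : b = b₀
      · subst hbb; rw [if_pos rfl, if_pos rfl, if_neg hI0, mul_one]
      · rw [if_neg hbb, if_neg hbb, mul_zero]
    have hzero : ∑ b : Fin n → Bool, (S b - a b * (SR / aR)) / aR * q = 0 := by
      have h1 : ∑ b : Fin n → Bool, (S b - a b * (SR / aR)) = 0 := by
        rw [Finset.sum_sub_distrib, ← hsum_int, ← Finset.sum_mul, ← hsum_meas, mul_comm,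
          div_mul_cancel₀ _ haRne, sub_self]
      calc ∑ b : Fin n → Bool, (S b - a b * (SR / aR)) / aR * q
          = (∑ b : Fin n → Bool, (S b - a b * (SR / aR))) / aR * q := by
            rw [← Finset.sum_mul, ← Finset.sum_div]
        _ = 0 := by rw [h1]; simp
    rw [Finset.sum_congr rfl (fun b _ => hterm b), Finset.sum_sub_distrib, hzero,
      Finset.sum_congr rfl (fun b _ => havg b), Finset.sum_ite_eq' Finset.univ b₀,
      Finset.sum_ite_eq' Finset.univ b₀, if_pos (Finset.mem_univ b₀),
      if_pos (Finset.mem_univ b₀), hindR, if_neg hR0]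
    ring
  · -- c not in R
    have h1 : ∀ b : Fin n → Bool,
        (dyadicCube n (kR+1) (childIdx jR b)).indicator (fun _ => (1:ℝ)) c = 0 :=
      fun b => Set.indicator_of_notMem (fun h => hc (Stmt19.child_subset b h)) _
    have h2 : (dyadicCube n kR jR).indicator (fun _ => (1:ℝ)) c = 0 :=
      Set.indicator_of_notMem hc _
    simp [h1, h2]


end
end
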